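/- arXiv:1402.2123 — 7 statements merged into one kernel-verified Lean document; each statement's English description precedes it below -/
import Mathlib

section
/- If f : X → Y is a standard ε-isometry between real Banach spaces (i.e., f(0) = 0 and | ‖f(x) − f(y)‖ − ‖x − y‖ | ≤ ε for all x, y ∈ X), then for every x* ∈ X* there exists φ ∈ Y* with ‖φ‖ = ‖x*‖ such that |⟨φ, f(x)⟩ − ⟨x*, x⟩| ≤ 4ε‖x*‖ for all x ∈ X. -/
open NormedSpace Filter

set_option linter.unusedSectionVars false

section AuxLemmas

variable {E : Type*} [NormedAddCommGroup E] [NormedSpace ℝ E]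

/-- If the norm has Fréchet derivative `d` at a unit vector `u`, then
`‖t • u + x‖ - t → d x` as `t → ∞`. -/
lemma ray_tendsto {u : E} {d : E →L[ℝ] ℝ}
    (hd : HasFDerivAt (fun v : E => ‖v‖) d u) (hu : ‖u‖ = 1) (x : E) :
    Tendsto (fun t : ℝ => ‖t • u + x‖ - t) atTop (nhds (d x)) := by
  have hv : Tendsto (fun t : ℝ => u + t⁻¹ • x) atTop (nhds u) := by
    have h1 : Tendsto (fun t : ℝ => t⁻¹ • x) atTop (nhds ((0:ℝ) • x)) :=
      tendsto_inv_atTop_zero.smul_const x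
    simpa using tendsto_const_nhds.add h1
  have hlo := (hd.isLittleO).comp_tendsto hv
  simp only [Function.comp_def, add_sub_cancel_left] at hlo
  have key : Tendsto (fun t : ℝ => ‖t • u + x‖ - t - d x) atTop (nhds 0) := by
    rw [Metric.tendsto_atTop]
    intro η hη
    have hc : (0:ℝ) < η / (2 * (‖x‖ + 1)) := by positivity
    obtain ⟨N₁, hN₁⟩ := Filter.eventually_atTop.1 (hlo.def hc)
    refine ⟨max N₁ 1, fun t ht => ?_⟩
    have ht1 : (1:ℝ) ≤ t := le_trans (le_max_right _ _) ht
    have htN : N₁ ≤ t := le_trans (le_max_left _ _) ht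
    have ht0 : (0:ℝ) < t := lt_of_lt_of_le one_pos ht1
    have hsm : t • (u + t⁻¹ • x) = t • u + x := by
      rw [smul_add, smul_smul, mul_inv_cancel₀ ht0.ne', one_smul]
    have hnm : ‖t • u + x‖ = t * ‖u + t⁻¹ • x‖ := by
      rw [← hsm, norm_smul, Real.norm_eq_abs, abs_of_pos ht0]
    have hd2 : d (t⁻¹ • x) = t⁻¹ * d x := by
      rw [map_smul]; simp
    have heq : ‖t • u + x‖ - t - d x
        = t * (‖u + t⁻¹ • x‖ - ‖u‖ - d (t⁻¹ • x)) := by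
      rw [hnm, hu, hd2]
      field_simp
    have hb := hN₁ t htN
    rw [Real.norm_eq_abs] at hb
    have hnx : |(‖u + t⁻¹ • x‖ - ‖u‖ - d (t⁻¹ • x))| ≤ η / (2 * (‖x‖ + 1)) * (t⁻¹ * ‖x‖) := by
      calc |(‖u + t⁻¹ • x‖ - ‖u‖ - d (t⁻¹ • x))| ≤ η / (2 * (‖x‖ + 1)) * ‖t⁻¹ • x‖ := hb
        _ = η / (2 * (‖x‖ + 1)) * (t⁻¹ * ‖x‖) := by
            rw [norm_smul, Real.norm_eq_abs, abs_of_pos (inv_pos.2 ht0)]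
    rw [Real.dist_eq, sub_zero, heq, abs_mul, abs_of_pos ht0]
    calc t * |(‖u + t⁻¹ • x‖ - ‖u‖ - d (t⁻¹ • x))|
        ≤ t * (η / (2 * (‖x‖ + 1)) * (t⁻¹ * ‖x‖)) := by
          exact mul_le_mul_of_nonneg_left hnx ht0.le
      _ = η / (2 * (‖x‖ + 1)) * ‖x‖ := by field_simp
      _ < η := by
          rw [div_mul_eq_mul_div, div_lt_iff₀ (by positivity)]
          nlinarith [norm_nonneg x]
  have := key.add_const (d x)
  simpa using this

/-- In a nontrivial finite-dimensional real normed space, for every `w` and `δ > 0` there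
is a unit vector `u` at which the norm is differentiable, whose derivative `d` satisfies
`‖d‖ ≤ 1` and `d w ≥ ‖w‖ - δ`. -/
lemma exists_norming_fderiv [FiniteDimensional ℝ E] [Nontrivial E] (w : E) {δ : ℝ}
    (hδ : 0 < δ) :
    ∃ (u : E) (d : E →L[ℝ] ℝ), ‖u‖ = 1 ∧ HasFDerivAt (fun v : E => ‖v‖) d u ∧
      ‖d‖ ≤ 1 ∧ ‖w‖ - δ ≤ d w := by
  classical
  obtain ⟨v₀, hv₀⟩ := exists_ne (0 : E)
  set xh : E := if w = 0 then ‖v₀‖⁻¹ • v₀ else ‖w‖⁻¹ • w with hxh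
  have hxh1 : ‖xh‖ = 1 := by
    rw [hxh]
    split_ifs with hw
    · exact norm_smul_inv_norm hv₀
    · exact norm_smul_inv_norm hw
  have hxhw : ‖w‖ • xh = w := by
    rw [hxh]
    split_ifs with hw
    · simp [hw]
    · rw [smul_smul, mul_inv_cancel₀ (norm_ne_zero_iff.2 hw), one_smul]
  set ρ : ℝ := min (δ / (2 * ‖w‖ + 2)) 2⁻¹ with hρdef
  have hρ0 : 0 < ρ := lt_min (by positivity) (by norm_num)
  have hρ2 : ρ ≤ 2⁻¹ := min_le_right _ _
  have hρδ : ρ * (2 * ‖w‖) ≤ δ := by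
    have h1 : ρ ≤ δ / (2 * ‖w‖ + 2) := min_le_left _ _
    have h2 : (0:ℝ) < 2 * ‖w‖ + 2 := by positivity
    calc ρ * (2 * ‖w‖) ≤ δ / (2 * ‖w‖ + 2) * (2 * ‖w‖ + 2) := by
          apply mul_le_mul h1 (by linarith) (by positivity) (by positivity)
      _ = δ := by field_simp
  have hdense := dense_differentiableAt_norm (E := E)
  obtain ⟨v, hvdiff, hvdist⟩ := Metric.mem_closure_iff.1 (hdense xh) ρ hρ0
  have hvdiff : DifferentiableAt ℝ (fun y : E => ‖y‖) v := hvdiff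
  have hvd : ‖xh - v‖ < ρ := by rw [← dist_eq_norm]; exact hvdist
  have habs : |‖xh‖ - ‖v‖| ≤ ‖xh - v‖ := abs_norm_sub_norm_le xh v
  rw [hxh1] at habs
  have hvlow : 1 - ρ ≤ ‖v‖ := by
    have := (abs_le.1 habs).2; linarith
  have hv0 : v ≠ 0 := by
    intro h
    rw [h, norm_zero] at hvlow
    have : ρ ≤ 2⁻¹ := hρ2
    linarith
  set u : E := ‖v‖⁻¹ • v with hudef
  have hu1 : ‖u‖ = 1 := norm_smul_inv_norm hv0
  have hudiff : DifferentiableAt ℝ (fun y : E => ‖y‖) u :=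
    (differentiableAt_norm_smul (inv_ne_zero (norm_ne_zero_iff.2 hv0))).1 hvdiff
  set d := fderiv ℝ (fun y : E => ‖y‖) u with hd
  have hfd : HasFDerivAt (fun y : E => ‖y‖) d u := hudiff.hasFDerivAt
  have hdu : d u = 1 := by
    have := hudiff.fderiv_norm_self
    rw [hu1] at this
    exact this
  have hdnorm : ‖d‖ ≤ 1 := by
    have := norm_fderiv_le_of_lipschitz ℝ (lipschitzWith_one_norm (E := E)) (x₀ := u)
    simpa using this
  refine ⟨u, d, hu1, hfd, hdnorm, ?_⟩
  have hvu : ‖v - u‖ ≤ ρ := by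
    have hveq : v - u = (1 - ‖v‖⁻¹) • v := by
      rw [sub_smul, one_smul, hudef]
    rw [hveq, norm_smul, Real.norm_eq_abs]
    have h1 : |1 - ‖v‖⁻¹| * ‖v‖ = |‖v‖ - 1| := by
      rw [← abs_of_nonneg (norm_nonneg v), ← abs_mul]
      congr 1
      have : ‖v‖ ≠ 0 := norm_ne_zero_iff.2 hv0
      rw [abs_of_nonneg (norm_nonneg v), sub_mul, one_mul, inv_mul_cancel₀ this]
    rw [h1, abs_sub_comm]
    have := (abs_le.1 habs).1
    have := (abs_le.1 habs).2
    rw [abs_le]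
    constructor <;> linarith
  have hxu : ‖xh - u‖ ≤ 2 * ρ := by
    calc ‖xh - u‖ = ‖(xh - v) + (v - u)‖ := by congr 1; abel
      _ ≤ ‖xh - v‖ + ‖v - u‖ := norm_add_le _ _
      _ ≤ 2 * ρ := by linarith
  have hdxh : 1 - 2 * ρ ≤ d xh := by
    have h1 : d xh = d u + d (xh - u) := by
      rw [← map_add]; congr 1; abel
    have h2 : |d (xh - u)| ≤ 2 * ρ := by
      calc |d (xh - u)| = ‖d (xh - u)‖ := (Real.norm_eq_abs _).symm
        _ ≤ ‖d‖ * ‖xh - u‖ := d.le_opNorm _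
        _ ≤ 1 * (2 * ρ) := by
            apply mul_le_mul hdnorm hxu (norm_nonneg _) zero_le_one
        _ = 2 * ρ := one_mul _
    have := (abs_le.1 h2).1
    rw [h1, hdu]
    linarith
  have hdw : d w = ‖w‖ * d xh := by
    conv_lhs => rw [← hxhw]
    rw [map_smul, smul_eq_mul]
  rw [hdw]
  have : ‖w‖ * (1 - 2 * ρ) ≤ ‖w‖ * d xh :=
    mul_le_mul_of_nonneg_left hdxh (norm_nonneg w)
  nlinarith [norm_nonneg w]


end AuxLemmas


section MainSection

variable {X Y : Type} [NormedAddCommGroup X] [NormedSpace ℝ X]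
  [NormedAddCommGroup Y] [NormedSpace ℝ Y] {ε : ℝ} {f : X → Y}

private lemma dist_f_le (hf : ∀ x y : X, |‖f x - f y‖ - ‖x - y‖| ≤ ε) (a b : X) :
    ‖f a - f b‖ ≤ ‖a - b‖ + ε := by
  have := (abs_le.1 (hf a b)).2; linarith

private lemma le_dist_f (hf : ∀ x y : X, |‖f x - f y‖ - ‖x - y‖| ≤ ε) (a b : X) :
    ‖a - b‖ - ε ≤ ‖f a - f b‖ := by
  have := (abs_le.1 (hf a b)).1; linarith

private lemma norm_f_le (hf0 : f 0 = 0) (hf : ∀ x y : X, |‖f x - f y‖ - ‖x - y‖| ≤ ε)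
    (z : X) : ‖f z‖ ≤ ‖z‖ + ε := by
  have := dist_f_le hf z 0
  rw [hf0, sub_zero, sub_zero] at this
  exact this

/-- Given a direction `u` along which the norm grows linearly with slopes prescribed by `r`,
there is a norm-one functional on `Y` which approximately implements `r` through `f`. -/
lemma exists_dual_of_direction (hε : 0 ≤ ε) (hf0 : f 0 = 0)
    (hf : ∀ x y : X, |‖f x - f y‖ - ‖x - y‖| ≤ ε)
    {u : X} (hu : ‖u‖ = 1) {δ : ℝ} (hδ : 0 < δ) (G : Finset X) (r : X → ℝ)
    (hray : ∀ x ∈ G,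
      Tendsto (fun t : ℝ => ‖t • u - x‖ - t) atTop (nhds (- r x)) ∧
      Tendsto (fun t : ℝ => ‖t • u + x‖ - t) atTop (nhds (r x))) :
    ∃ ψ : StrongDual ℝ Y, ‖ψ‖ = 1 ∧ ∀ x ∈ G, |ψ (f x) - r x| ≤ 3 * ε + δ := by
  have hev : ∀ᶠ t : ℝ in atTop,
      (∀ x ∈ G, ‖t • u - x‖ ≤ t - r x + δ ∧ ‖t • u + x‖ ≤ t + r x + δ) ∧ ε < t := by
    refine Filter.Eventually.and ((Filter.eventually_all_finset G).2 ?_) (eventually_gt_atTop ε)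
    intro x hx
    have h1 := (hray x hx).1.eventually_le_const (show -r x < -r x + δ by linarith)
    have h2 := (hray x hx).2.eventually_le_const (show r x < r x + δ by linarith)
    filter_upwards [h1, h2] with t h1 h2
    exact ⟨by linarith, by linarith⟩
  obtain ⟨t, hG, htε⟩ := hev.exists
  have ht0 : 0 < t := lt_of_le_of_lt hε htε
  have hnormtu : ‖t • u‖ = t := by
    rw [norm_smul, Real.norm_eq_abs, abs_of_pos ht0, hu, mul_one]
  have h2t : 2 * t - ε ≤ ‖f (t • u) - f (-(t • u))‖ := by
    have h := le_dist_f hf (t • u) (-(t • u))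
    have : ‖t • u - -(t • u)‖ = 2 * t := by
      rw [sub_neg_eq_add, ← add_smul]
      rw [norm_smul, Real.norm_eq_abs, abs_of_pos (by linarith : (0:ℝ) < t + t), hu, mul_one]
      ring
    rw [this] at h
    exact h
  have hpq0 : f (t • u) - f (-(t • u)) ≠ 0 := by
    intro h
    rw [h, norm_zero] at h2t
    linarith
  obtain ⟨ψ, hψ1, hψpq⟩ := exists_dual_vector ℝ (f (t • u) - f (-(t • u))) (norm_ne_zero_iff.2 hpq0)
  have habs : ∀ z : Y, |ψ z| ≤ ‖z‖ := by
    intro z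
    calc |ψ z| = ‖ψ z‖ := (Real.norm_eq_abs _).symm
      _ ≤ ‖ψ‖ * ‖z‖ := ψ.le_opNorm z
      _ = ‖z‖ := by rw [hψ1, one_mul]
  have hsub : ∀ a b : Y, ψ a - ψ b = ψ (a - b) := by
    intro a b; rw [map_sub]
  have hfp : ‖f (t • u)‖ ≤ t + ε := by
    have := norm_f_le hf0 hf (t • u); rw [hnormtu] at this; exact this
  have hfq : ‖f (-(t • u))‖ ≤ t + ε := by
    have := norm_f_le hf0 hf (-(t • u))
    rw [norm_neg, hnormtu] at this; exact this
  have hdiff : ψ (f (t • u)) - ψ (f (-(t • u))) = ‖f (t • u) - f (-(t • u))‖ := by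
    rw [hsub]; exact_mod_cast hψpq
  have hp : t - 2 * ε ≤ ψ (f (t • u)) := by
    have h1 : -(t + ε) ≤ ψ (f (-(t • u))) := by
      have := (abs_le.1 (habs (f (-(t • u))))).1
      linarith
    linarith
  have hq : ψ (f (-(t • u))) ≤ -t + 2 * ε := by
    have h1 : ψ (f (t • u)) ≤ t + ε := le_trans (le_abs_self _) (le_trans (habs _) hfp)
    linarith
  refine ⟨ψ, hψ1, fun x hx => ?_⟩
  obtain ⟨hxm, hxp⟩ := hG x hx
  have hlow : r x - 3 * ε - δ ≤ ψ (f x) := by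
    have h1 : ψ (f (t • u)) - ψ (f x) ≤ ‖t • u - x‖ + ε := by
      calc ψ (f (t • u)) - ψ (f x) = ψ (f (t • u) - f x) := hsub _ _
        _ ≤ |ψ (f (t • u) - f x)| := le_abs_self _
        _ ≤ ‖f (t • u) - f x‖ := habs _
        _ ≤ ‖t • u - x‖ + ε := dist_f_le hf _ _
    linarith
  have hhigh : ψ (f x) ≤ r x + 3 * ε + δ := by
    have h1 : ψ (f x) - ψ (f (-(t • u))) ≤ ‖t • u + x‖ + ε := by
      calc ψ (f x) - ψ (f (-(t • u))) = ψ (f x - f (-(t • u))) := hsub _ _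
        _ ≤ |ψ (f x - f (-(t • u)))| := le_abs_self _
        _ ≤ ‖f x - f (-(t • u))‖ := habs _
        _ ≤ ‖x - -(t • u)‖ + ε := dist_f_le hf _ _
        _ = ‖t • u + x‖ + ε := by rw [sub_neg_eq_add, add_comm x (t • u)]
    linarith
  rw [abs_le]
  exact ⟨by linarith, by linarith⟩

lemma finite_feasible (hε : 0 ≤ ε) (hf0 : f 0 = 0)
    (hf : ∀ x y : X, |‖f x - f y‖ - ‖x - y‖| ≤ ε)
    (x' : StrongDual ℝ X) (hx' : ‖x'‖ ≤ 1) (G : Finset X) {δ : ℝ} (hδ : 0 < δ) :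
    ∃ ψ : StrongDual ℝ Y, ‖ψ‖ ≤ 1 ∧ ∀ x ∈ G, |ψ (f x) - x' x| ≤ 3 * ε + δ := by
  classical
  by_cases hG0 : ∀ x ∈ G, x = (0 : X)
  · refine ⟨0, by simp, fun x hx => ?_⟩
    rw [hG0 x hx]
    simp only [ContinuousLinearMap.zero_apply, map_zero, sub_zero, abs_zero]
    positivity
  push_neg at hG0
  obtain ⟨x₀, hx₀G, hx₀⟩ := hG0
  set E := Submodule.span ℝ (G : Set X) with hE
  haveI : Nontrivial E := by
    refine ⟨⟨⟨x₀, Submodule.subset_span (Finset.mem_coe.2 hx₀G)⟩, 0, ?_⟩⟩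
    simp only [ne_eq, Submodule.mk_eq_zero]
    exact hx₀
  set emb : {x : X // x ∈ G} → E :=
    fun i => ⟨i.1, Submodule.subset_span (Finset.mem_coe.2 i.2)⟩ with hemb
  set c : {x : X // x ∈ G} → ℝ := fun i => x' i.1 with hc
  set S : Set ({x : X // x ∈ G} → ℝ) :=
    {p | ∃ (u : E) (d : E →L[ℝ] ℝ), ‖u‖ = 1 ∧ HasFDerivAt (fun v : E => ‖v‖) d u ∧ ‖d‖ ≤ 1 ∧
      ∀ i, p i = d (emb i)} with hS
  have hLrep : ∀ (L : ({x : X // x ∈ G} → ℝ) →L[ℝ] ℝ) (p : {x : X // x ∈ G} → ℝ),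
      L p = ∑ i, p i * L (Pi.single i 1) := by
    intro L p
    conv_lhs => rw [← Finset.univ_sum_single p]
    rw [map_sum]
    refine Finset.sum_congr rfl fun i _ => ?_
    have hps : Pi.single i (p i) = p i • (Pi.single i 1 : {x : X // x ∈ G} → ℝ) := by
      funext j
      by_cases h : j = i
      · subst h; simp
      · simp [Pi.single_apply, h]
    rw [hps, map_smul, smul_eq_mul]
  have hcS : c ∈ closure (convexHull ℝ S) := by
    by_contra hcon
    obtain ⟨L, β, hLs, hLc⟩ := geometric_hahn_banach_closed_point
      ((convex_convexHull ℝ S).closure) isClosed_closure hcon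
    set w : E := ∑ i, L (Pi.single i 1) • emb i with hw
    have hβ : ‖w‖ ≤ β := by
      refine le_of_forall_sub_le fun δ' hδ' => ?_
      obtain ⟨u, d, hu1, hdfd, hdn, hdw⟩ := exists_norming_fderiv (E := E) w hδ'
      have hmem : (fun i => d (emb i)) ∈ closure (convexHull ℝ S) :=
        subset_closure (subset_convexHull ℝ S ⟨u, d, hu1, hdfd, hdn, fun i => rfl⟩)
      have hLp : L (fun i => d (emb i)) = d w := by
        rw [hLrep L, hw, map_sum]
        refine Finset.sum_congr rfl fun i _ => ?_
        rw [map_smul, smul_eq_mul, mul_comm]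
      have h := hLs _ hmem
      rw [hLp] at h
      linarith
    have hLcval : L c = x' (↑w) := by
      rw [hLrep L]
      have hwcoe : ((w : E) : X) = ∑ i, L (Pi.single i 1) • (i.1 : X) := by
        rw [hw]
        push_cast
        rfl
      rw [hwcoe, map_sum]
      refine Finset.sum_congr rfl fun i _ => ?_
      rw [map_smul, smul_eq_mul, mul_comm]
    have h1 : x' ↑w ≤ ‖x'‖ * ‖((w : E) : X)‖ := by
      calc x' ↑w ≤ |x' ↑w| := le_abs_self _
        _ = ‖x' ↑w‖ := (Real.norm_eq_abs _).symm
        _ ≤ ‖x'‖ * ‖((w : E) : X)‖ := x'.le_opNorm _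
    have h2 : ‖((w : E) : X)‖ = ‖w‖ := (Submodule.coe_norm w).symm
    have h3 : ‖x'‖ * ‖((w : E) : X)‖ ≤ ‖w‖ := by
      rw [h2]
      calc ‖x'‖ * ‖w‖ ≤ 1 * ‖w‖ := mul_le_mul_of_nonneg_right hx' (norm_nonneg _)
        _ = ‖w‖ := one_mul _
    rw [hLcval] at hLc
    linarith
  obtain ⟨b, hbS, hbdist⟩ := Metric.mem_closure_iff.1 hcS (δ/2) (by positivity)
  rw [convexHull_eq] at hbS
  obtain ⟨κ, T, cw, z, hcw0, hcw1, hzS, hmass⟩ := hbS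
  have hbsum : b = ∑ j ∈ T, cw j • z j := by
    rw [← hmass, Finset.centerMass_eq_of_sum_1 _ _ hcw1]
  choose uu dd hu1 hufd hdn hdval using hzS
  have hψ : ∀ j (hj : j ∈ T), ∃ ψ : StrongDual ℝ Y, ‖ψ‖ = 1 ∧
      ∀ i : {x : X // x ∈ G}, |ψ (f i.1) - dd j hj (emb i)| ≤ 3 * ε + δ/2 := by
    intro j hj
    have hucoe : ‖((uu j hj : E) : X)‖ = 1 := by
      rw [← Submodule.coe_norm]
      exact hu1 j hj
    have hray : ∀ x ∈ G,
        Tendsto (fun t : ℝ => ‖t • ((uu j hj : E) : X) - x‖ - t) atTop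
          (nhds (- (fun x => if hx : x ∈ G then dd j hj (emb ⟨x, hx⟩) else 0) x)) ∧
        Tendsto (fun t : ℝ => ‖t • ((uu j hj : E) : X) + x‖ - t) atTop
          (nhds ((fun x => if hx : x ∈ G then dd j hj (emb ⟨x, hx⟩) else 0) x)) := by
      intro x hx
      simp only [dif_pos hx]
      constructor
      · have h := ray_tendsto (hufd j hj) (hu1 j hj) (-(emb ⟨x, hx⟩))
        rw [map_neg] at h
        have heq : (fun t : ℝ => ‖t • ((uu j hj : E) : X) - x‖ - t)
            = fun t : ℝ => ‖t • (uu j hj) + -(emb ⟨x, hx⟩)‖ - t := by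
          funext t
          congr 1
          rw [Submodule.coe_norm]
          congr 1
          push_cast
          abel
        rw [heq]
        exact h
      · have h := ray_tendsto (hufd j hj) (hu1 j hj) (emb ⟨x, hx⟩)
        have heq : (fun t : ℝ => ‖t • ((uu j hj : E) : X) + x‖ - t)
            = fun t : ℝ => ‖t • (uu j hj) + emb ⟨x, hx⟩‖ - t := by
          funext t
          congr 1
        rw [heq]
        exact h
    obtain ⟨ψ, hψn, hψb⟩ := exists_dual_of_direction hε hf0 hf hucoe (half_pos hδ) G _ hray
    refine ⟨ψ, hψn, fun i => ?_⟩
    have h := hψb i.1 i.2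
    rw [dif_pos i.2] at h
    exact h
  choose ψf hψ1 hψ2 using hψ
  refine ⟨∑ j ∈ T.attach, cw j.1 • ψf j.1 j.2, ?_, ?_⟩
  · calc ‖∑ j ∈ T.attach, cw j.1 • ψf j.1 j.2‖
        ≤ ∑ j ∈ T.attach, ‖cw j.1 • ψf j.1 j.2‖ := norm_sum_le _ _
      _ = ∑ j ∈ T.attach, cw j.1 := by
          refine Finset.sum_congr rfl fun j _ => ?_
          rw [norm_smul, Real.norm_eq_abs, abs_of_nonneg (hcw0 j.1 j.2), hψ1, mul_one]
      _ = ∑ j ∈ T, cw j := Finset.sum_attach T cw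
      _ = 1 := hcw1
  · intro x hx
    set i : {x : X // x ∈ G} := ⟨x, hx⟩ with hi
    have happ : (∑ j ∈ T.attach, cw j.1 • ψf j.1 j.2) (f x)
        = ∑ j ∈ T.attach, cw j.1 * (ψf j.1 j.2 (f x)) := by
      rw [ContinuousLinearMap.sum_apply]
      refine Finset.sum_congr rfl fun j _ => ?_
      rw [ContinuousLinearMap.smul_apply, smul_eq_mul]
    have hbi : b i = ∑ j ∈ T.attach, cw j.1 * dd j.1 j.2 (emb i) := by
      rw [hbsum]
      rw [← Finset.sum_attach T fun j => cw j • z j]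
      rw [Finset.sum_apply]
      refine Finset.sum_congr rfl fun j _ => ?_
      rw [Pi.smul_apply, smul_eq_mul, hdval j.1 j.2 i]
    have hci : |c i - b i| ≤ δ/2 := by
      have h1 := dist_le_pi_dist c b i
      rw [Real.dist_eq] at h1
      linarith [lt_of_le_of_lt h1 hbdist]
    have hmain : |(∑ j ∈ T.attach, cw j.1 • ψf j.1 j.2) (f x) - b i| ≤ 3*ε + δ/2 := by
      rw [happ, hbi, ← Finset.sum_sub_distrib]
      calc |∑ j ∈ T.attach, (cw j.1 * ψf j.1 j.2 (f x) - cw j.1 * dd j.1 j.2 (emb i))|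
          ≤ ∑ j ∈ T.attach, |cw j.1 * ψf j.1 j.2 (f x) - cw j.1 * dd j.1 j.2 (emb i)| :=
            Finset.abs_sum_le_sum_abs _ _
        _ ≤ ∑ j ∈ T.attach, cw j.1 * (3*ε + δ/2) := by
            refine Finset.sum_le_sum fun j _ => ?_
            rw [← mul_sub, abs_mul, abs_of_nonneg (hcw0 j.1 j.2)]
            exact mul_le_mul_of_nonneg_left (hψ2 j.1 j.2 i) (hcw0 j.1 j.2)
        _ = 3*ε + δ/2 := by rw [← Finset.sum_mul, Finset.sum_attach, hcw1, one_mul]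
    have hxc : x' x = c i := rfl
    calc |(∑ j ∈ T.attach, cw j.1 • ψf j.1 j.2) (f x) - x' x|
        ≤ |(∑ j ∈ T.attach, cw j.1 • ψf j.1 j.2) (f x) - b i| + |b i - x' x| := abs_sub_le _ _ _
      _ ≤ (3*ε + δ/2) + (δ/2) := by
          refine add_le_add hmain ?_
          rw [hxc, abs_sub_comm]
          exact hci
      _ = 3*ε + δ := by ring

lemma all_feasible (hε : 0 ≤ ε) (hf0 : f 0 = 0)
    (hf : ∀ x y : X, |‖f x - f y‖ - ‖x - y‖| ≤ ε)
    (x' : StrongDual ℝ X) (hx' : ‖x'‖ ≤ 1) :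
    ∃ φ : StrongDual ℝ Y, ‖φ‖ ≤ 1 ∧ ∀ x : X, |φ (f x) - x' x| ≤ 3 * ε := by
  classical
  set C : X × ℕ → Set (WeakDual ℝ Y) := fun p =>
    {ψ : WeakDual ℝ Y | |ψ (f p.1) - x' p.1| ≤ 3 * ε + 1 / (p.2 + 1)} with hC
  have hclosed : ∀ p, IsClosed (C p) := by
    intro p
    have hcont : Continuous fun ψ : WeakDual ℝ Y => |ψ (f p.1) - x' p.1| :=
      ((WeakDual.eval_continuous (f p.1)).sub continuous_const).abs
    exact isClosed_le hcont continuous_const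
  have hcpt : IsCompact (WeakDual.toStrongDual ⁻¹' Metric.closedBall 0 1 : Set (WeakDual ℝ Y)) :=
    WeakDual.isCompact_closedBall (0 : StrongDual ℝ Y) 1
  have hfip : ∀ u : Finset (X × ℕ),
      ((WeakDual.toStrongDual ⁻¹' Metric.closedBall 0 1 : Set (WeakDual ℝ Y))
        ∩ ⋂ p ∈ u, C p).Nonempty := by
    intro u
    set G : Finset X := u.image Prod.fst with hG
    set n : ℕ := u.sup Prod.snd with hn
    obtain ⟨ψ, hψn, hψb⟩ := finite_feasible hε hf0 hf x' hx' G
      (δ := 1/((n:ℝ)+1)) (by positivity)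
    refine ⟨StrongDual.toWeakDual ψ, ?_, ?_⟩
    · simp only [Set.mem_preimage]
      rw [mem_closedBall_zero_iff]
      exact hψn
    · simp only [Set.mem_iInter]
      intro p hp
      have hx : p.1 ∈ G := Finset.mem_image_of_mem Prod.fst hp
      have hnle : p.2 ≤ n := Finset.le_sup hp
      refine le_trans (hψb p.1 hx) ?_
      have hd : 1/((n:ℝ)+1) ≤ 1/((p.2:ℝ)+1) := by
        apply one_div_le_one_div_of_le (by positivity)
        have : (p.2 : ℝ) ≤ n := by exact_mod_cast hnle
        linarith
      linarith
  obtain ⟨φw, hφball, hφmem⟩ := hcpt.inter_iInter_nonempty C hclosed hfip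
  refine ⟨WeakDual.toStrongDual φw, ?_, ?_⟩
  · exact mem_closedBall_zero_iff.1 (Set.mem_preimage.1 hφball)
  · intro x
    have hall : ∀ n : ℕ, |φw (f x) - x' x| ≤ 3 * ε + 1/((n:ℝ)+1) := by
      intro n
      have := Set.mem_iInter.1 hφmem (x, n)
      exact this
    by_contra hcon
    push_neg at hcon
    have hpos : 0 < |(WeakDual.toStrongDual φw) (f x) - x' x| - 3 * ε := by linarith
    obtain ⟨n, hnlt⟩ := exists_nat_one_div_lt hpos
    have := hall n
    have heq : φw (f x) = (WeakDual.toStrongDual φw) (f x) := rfl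
    rw [heq] at this
    linarith


end MainSection


/-- **Cheng–Dong–Zhang theorem.** If `f : X → Y` is a standard `ε`-isometry between
real Banach spaces, then for every `x* ∈ X*` there exists `φ ∈ Y*` with `‖φ‖ = ‖x*‖`
such that `|⟨φ, f x⟩ - ⟨x*, x⟩| ≤ 4 ε ‖x*‖` for all `x ∈ X`. -/
theorem stmt0 (X Y : Type) [NormedAddCommGroup X] [NormedSpace ℝ X] [CompleteSpace X]
    [NormedAddCommGroup Y] [NormedSpace ℝ Y] [CompleteSpace Y]
    (ε : ℝ) (hε : 0 ≤ ε) (f : X → Y) (hf0 : f 0 = 0)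
    (hf : ∀ x y : X, |‖f x - f y‖ - ‖x - y‖| ≤ ε)
    (x' : StrongDual ℝ X) :
    ∃ φ : StrongDual ℝ Y, ‖φ‖ = ‖x'‖ ∧ ∀ x : X, |φ (f x) - x' x| ≤ 4 * ε * ‖x'‖ := by
  rcases eq_or_ne x' 0 with rfl | hx0
  · refine ⟨0, by simp, fun x => by simp⟩
  have hr : 0 < ‖x'‖ := norm_pos_iff.2 hx0
  set x0 : StrongDual ℝ X := ‖x'‖⁻¹ • x' with hx0def
  have hx0n : ‖x0‖ = 1 := by
    rw [hx0def, norm_smul, Real.norm_eq_abs, abs_of_pos (inv_pos.2 hr), inv_mul_cancel₀ hr.ne']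
  obtain ⟨φ₀, hφ₀n, hφ₀b⟩ := all_feasible hε hf0 hf x0 hx0n.le
  have hφ₀1 : ‖φ₀‖ = 1 := by
    refine le_antisymm hφ₀n ?_
    refine le_of_forall_sub_le fun η hη => ?_
    rcases le_or_gt 1 η with hη1 | hη1
    · linarith [norm_nonneg φ₀]
    have hno : ¬ ‖x0‖ ≤ 1 - η := by rw [hx0n]; linarith
    rw [ContinuousLinearMap.opNorm_le_iff (by linarith)] at hno
    push_neg at hno
    obtain ⟨y, hy⟩ := hno
    obtain ⟨x, hx⟩ : ∃ x : X, (1-η) * ‖x‖ < x0 x := by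
      rcases le_or_gt 0 (x0 y) with h | h
      · refine ⟨y, ?_⟩
        rw [Real.norm_eq_abs, abs_of_nonneg h] at hy
        linarith
      · refine ⟨-y, ?_⟩
        rw [Real.norm_eq_abs, abs_of_neg h] at hy
        rw [norm_neg, map_neg]
        linarith
    have hxne : (0:ℝ) < ‖x‖ := by
      by_contra hc
      push_neg at hc
      have hz : ‖x‖ = 0 := le_antisymm hc (norm_nonneg x)
      have hx0' : x = 0 := norm_eq_zero.1 hz
      rw [hx0', norm_zero, mul_zero, map_zero] at hx
      exact lt_irrefl 0 hx
    by_contra hcon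
    push_neg at hcon
    set A : ℝ := ((1-η) - ‖φ₀‖) * ‖x‖ with hA
    have hApos : 0 < A := by
      apply mul_pos _ hxne
      linarith
    set t : ℝ := (‖φ₀‖ * ε + 3 * ε + 1) / A with ht
    have htpos : 0 < t := by
      apply div_pos _ hApos
      have := norm_nonneg φ₀
      nlinarith
    set zc : X := t • x with hzc
    have h1 : x0 zc = t * x0 x := by rw [hzc, map_smul, smul_eq_mul]
    have h2 := hφ₀b zc
    have h3 : φ₀ (f zc) ≤ ‖φ₀‖ * ‖f zc‖ := by
      calc φ₀ (f zc) ≤ |φ₀ (f zc)| := le_abs_self _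
        _ = ‖φ₀ (f zc)‖ := (Real.norm_eq_abs _).symm
        _ ≤ ‖φ₀‖ * ‖f zc‖ := φ₀.le_opNorm _
    have h4 : ‖f zc‖ ≤ ‖zc‖ + ε := norm_f_le hf0 hf zc
    have h5 : ‖zc‖ = t * ‖x‖ := by rw [hzc, norm_smul, Real.norm_eq_abs, abs_of_pos htpos]
    have h6 : t * ((1-η) * ‖x‖) < x0 zc := by
      rw [h1]
      exact mul_lt_mul_of_pos_left hx htpos
    have h7 := (abs_le.1 h2).1
    have h8 : ‖φ₀‖ * ‖f zc‖ ≤ ‖φ₀‖ * (t * ‖x‖ + ε) := by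
      rw [← h5]
      exact mul_le_mul_of_nonneg_left h4 (norm_nonneg _)
    have hfin : t * ((1-η) * ‖x‖) < ‖φ₀‖ * (t * ‖x‖ + ε) + 3 * ε := by linarith
    have htA : t * A = ‖φ₀‖ * ε + 3 * ε + 1 := by
      rw [ht]
      exact div_mul_cancel₀ _ hApos.ne'
    have e1 : t * A = t * ((1-η) * ‖x‖) - ‖φ₀‖ * (t * ‖x‖) := by rw [hA]; ring
    have e2 : ‖φ₀‖ * (t * ‖x‖ + ε) = ‖φ₀‖ * (t * ‖x‖) + ‖φ₀‖ * ε := by ring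
    linarith
  refine ⟨‖x'‖ • φ₀, ?_, ?_⟩
  · rw [norm_smul, Real.norm_eq_abs, abs_of_pos hr, hφ₀1, mul_one]
  · intro x
    have hb := hφ₀b x
    have hsmul : (‖x'‖ • φ₀) (f x) = ‖x'‖ * φ₀ (f x) := rfl
    have hx'x : x' x = ‖x'‖ * x0 x := by
      rw [hx0def]
      simp only [ContinuousLinearMap.smul_apply, smul_eq_mul]
      field_simp
    rw [hsmul, hx'x, ← mul_sub, abs_mul, abs_of_pos hr]
    calc ‖x'‖ * |φ₀ (f x) - x0 x| ≤ ‖x'‖ * (3 * ε) :=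
        mul_le_mul_of_nonneg_left hb hr.le
      _ ≤ 4 * ε * ‖x'‖ := by nlinarith
end

section
/- For every infinite-dimensional real Banach space X, the cardinality of X equals dens(X)^ℵ0, where dens(X) is the density character of X (the smallest cardinality of a dense subset). -/
open Cardinal Metric Set Pointwise

private noncomputable def treeLam (e : ℕ → ℝ) : ℕ → ℝ
  | 0 => 1
  | k+1 => treeLam e k * e k / 8

section Aux

variable {X : Type} [NormedAddCommGroup X] [NormedSpace ℝ X]

private lemma exists_maximal_sep' (X : Type) [NormedAddCommGroup X] (ε : ℝ) (hε : 0 < ε) :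
    ∃ M : Set X, M ⊆ closedBall 0 1 ∧
      (∀ x ∈ M, ∀ y ∈ M, x ≠ y → ε ≤ dist x y) ∧
      (∀ y ∈ closedBall (0:X) 1, ∃ z ∈ M, dist y z < ε) := by
  set P : Set (Set X) := {s | s ⊆ closedBall 0 1 ∧ ∀ x ∈ s, ∀ y ∈ s, x ≠ y → ε ≤ dist x y} with hP
  have hzorn := zorn_subset P (fun c hcP hchain => by
    refine ⟨⋃₀ c, ⟨?_, ?_⟩, fun s hs => subset_sUnion_of_mem hs⟩
    · intro x hx
      obtain ⟨s, hs, hxs⟩ := hx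
      exact (hcP hs).1 hxs
    · intro x hx y hy hxy
      obtain ⟨s, hs, hxs⟩ := hx
      obtain ⟨t, ht, hyt⟩ := hy
      rcases hchain.total hs ht with h | h
      · exact (hcP ht).2 x (h hxs) y hyt hxy
      · exact (hcP hs).2 x hxs y (h hyt) hxy)
  obtain ⟨M, hmax⟩ := hzorn
  have hM : M ∈ P := hmax.prop
  refine ⟨M, hM.1, hM.2, ?_⟩
  intro y hy
  by_cases hyM : y ∈ M
  · exact ⟨y, hyM, by simpa using hε⟩
  by_contra hcon
  push_neg at hcon
  have : insert y M ∈ P := by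
    constructor
    · exact insert_subset hy hM.1
    · intro a ha b hb hab
      rcases ha with rfl | ha
      · rcases hb with rfl | hb
        · exact absurd rfl hab
        · exact hcon b hb
      · rcases hb with rfl | hb
        · rw [dist_comm]; exact hcon a ha
        · exact hM.2 a ha b hb hab
  have := hmax.eq_of_subset this (subset_insert y M)
  exact hyM (this ▸ mem_insert y M)

/-- Core tree lemma: a product of bounded separated sets injects into X. -/
private lemma tree_inj' [CompleteSpace X] (M : ℕ → Set X) (hMb : ∀ n, M n ⊆ closedBall 0 1)
    (hMs : ∀ n, ∀ x ∈ M n, ∀ y ∈ M n, x ≠ y → (1:ℝ)/(n+1) ≤ dist x y)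
    (h : ℕ → ℕ) :
    ∃ Φ : (∀ k, M (h k)) → X, Function.Injective Φ := by
  classical
  set e : ℕ → ℝ := fun k => 1/(h k + 1) with he
  have epos : ∀ k, 0 < e k := fun k => by positivity
  have ele1 : ∀ k, e k ≤ 1 := fun k => by
    rw [he, div_le_one (by positivity)]
    have : (0:ℝ) ≤ (h k : ℝ) := Nat.cast_nonneg _
    linarith
  set lam := treeLam e with hlam
  have lam0 : lam 0 = 1 := rfl
  have lamsucc : ∀ k, lam (k+1) = lam k * e k / 8 := fun k => rfl
  have lampos : ∀ k, 0 < lam k := by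
    intro k; induction k with
    | zero => norm_num [lam0]
    | succ k ih => rw [lamsucc]; exact div_pos (mul_pos ih (epos k)) (by norm_num)
  have lamdec : ∀ k, lam (k+1) ≤ lam k * (1/8) := by
    intro k
    rw [lamsucc]
    have h1 := ele1 k
    have h3 := lampos k
    nlinarith
  have lamgeo : ∀ k j, lam (k + j) ≤ lam k * (1/8:ℝ)^j := by
    intro k j; induction j with
    | zero => simp
    | succ j ih =>
      calc lam (k + (j+1)) = lam ((k+j)+1) := by ring_nf
        _ ≤ lam (k+j) * (1/8) := lamdec _
        _ ≤ (lam k * (1/8:ℝ)^j) * (1/8) := by nlinarith [lampos (k+j)]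
        _ = lam k * (1/8:ℝ)^(j+1) := by ring
  have lamle : ∀ k, lam k ≤ (1/8:ℝ)^k := fun k => by
    have h1 := lamgeo 0 k
    rw [zero_add, lam0, one_mul] at h1
    exact h1
  have geo : Summable (fun j : ℕ => (1/8:ℝ)^j) :=
    summable_geometric_of_lt_one (by norm_num) (by norm_num)
  have lamsummable : Summable lam :=
    Summable.of_nonneg_of_le (fun k => (lampos k).le) lamle geo
  have tailbound : ∀ k, (∑' j, lam (k + 1 + j)) ≤ 2 * lam (k+1) := by
    intro k
    have hs : Summable (fun j => lam (k + 1 + j)) := by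
      have := (summable_nat_add_iff (k+1)).2 lamsummable
      simpa [Nat.add_comm] using this
    calc (∑' j, lam (k + 1 + j)) ≤ ∑' j, lam (k+1) * (1/8:ℝ)^j :=
          Summable.tsum_le_tsum (fun j => lamgeo (k+1) j) hs (geo.mul_left _)
      _ = lam (k+1) * (1 - 1/8)⁻¹ := by
          rw [tsum_mul_left, tsum_geometric_of_lt_one (by norm_num) (by norm_num)]
      _ ≤ 2 * lam (k+1) := by nlinarith [lampos (k+1)]
  have normbound : ∀ (σ : ∀ k, M (h k)) (k), ‖(σ k : X)‖ ≤ 1 := by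
    intro σ k
    have := hMb (h k) (σ k).2
    simpa [mem_closedBall, dist_eq_norm] using this
  have summ : ∀ σ : (∀ k, M (h k)), Summable (fun k => lam k • (σ k : X)) := by
    intro σ
    apply Summable.of_norm
    apply Summable.of_nonneg_of_le (fun k => norm_nonneg _) (fun k => ?_) lamsummable
    rw [norm_smul]
    calc ‖lam k‖ * ‖(σ k : X)‖ ≤ ‖lam k‖ * 1 :=
          mul_le_mul_of_nonneg_left (normbound σ k) (norm_nonneg _)
      _ = lam k := by rw [mul_one, Real.norm_of_nonneg (lampos k).le]
  refine ⟨fun σ => ∑' k, lam k • (σ k : X), ?_⟩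
  intro σ τ hst
  by_contra hne
  have hne' : ∃ k, (σ k : X) ≠ (τ k : X) := by
    by_contra hc
    push_neg at hc
    exact hne (funext fun k => Subtype.ext (hc k))
  obtain ⟨k, hkne, hklt⟩ : ∃ k, (σ k : X) ≠ (τ k : X) ∧ ∀ j < k, (σ j : X) = (τ j : X) := by
    refine ⟨Nat.find hne', Nat.find_spec hne', fun j hj => ?_⟩
    by_contra hc
    have h2 : Nat.find hne' ≤ j := Nat.find_le hc
    omega
  set a : ℕ → X := fun j => lam j • (σ j : X) - lam j • (τ j : X) with ha
  have asumm : Summable a := (summ σ).sub (summ τ)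
  have hdiff : (∑' j, lam j • (σ j : X)) - (∑' j, lam j • (τ j : X)) = ∑' j, a j :=
    (Summable.tsum_sub (summ σ) (summ τ)).symm
  have hzero : ∀ j < k, a j = 0 := fun j hj => by rw [ha]; simp [hklt j hj]
  have hsplit : (∑' j, a j) = a k + ∑' j, a (j + (k+1)) := by
    rw [← Summable.sum_add_tsum_nat_add (k+1) asumm]
    congr 1
    rw [Finset.sum_eq_single k]
    · intro b hb hbk
      exact hzero b (by simp at hb; omega)
    · intro hb; simp at hb
  have hak : lam k * e k ≤ ‖a k‖ := by
    rw [ha]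
    simp only [← smul_sub, norm_smul, Real.norm_of_nonneg (lampos k).le]
    have hd := hMs (h k) _ (σ k).2 _ (τ k).2 hkne
    rw [dist_eq_norm] at hd
    have : e k ≤ ‖(σ k : X) - (τ k : X)‖ := by
      rw [he]
      exact_mod_cast hd
    exact mul_le_mul_of_nonneg_left this (lampos k).le
  have hanorm : ∀ j, ‖a j‖ ≤ 2 * lam j := by
    intro j
    rw [ha]
    calc ‖lam j • (σ j : X) - lam j • (τ j : X)‖
        ≤ ‖lam j • (σ j : X)‖ + ‖lam j • (τ j : X)‖ := norm_sub_le _ _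
      _ ≤ lam j * 1 + lam j * 1 := by
          rw [norm_smul, norm_smul, Real.norm_of_nonneg (lampos j).le]
          have h1 := normbound σ j
          have h2 := normbound τ j
          have h3 := (lampos j).le
          nlinarith
      _ = 2 * lam j := by ring
  have asummnorm : Summable (fun j => ‖a j‖) :=
    Summable.of_nonneg_of_le (fun j => norm_nonneg _) hanorm (lamsummable.mul_left 2)
  have htail : ‖∑' j, a (j + (k+1))‖ ≤ lam k * e k / 2 := by
    set b : ℕ → X := fun j => a (j + (k+1)) with hbdef
    have hbnorm : ∀ j, ‖b j‖ ≤ 2 * lam (k + 1 + j) := by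
      intro j
      calc ‖b j‖ ≤ 2 * lam (j + (k+1)) := hanorm _
        _ = 2 * lam (k + 1 + j) := by ring_nf
    have hlamtail : ∀ j, 2 * lam (k + 1 + j) ≤ 2 * (1/8:ℝ)^j := by
      intro j
      have h1 := lamle (k + 1 + j)
      have h2 : ((1:ℝ)/8)^(k+1+j) ≤ (1/8:ℝ)^j := by
        apply pow_le_pow_of_le_one (by norm_num) (by norm_num)
        omega
      linarith
    have hs2 : Summable (fun j => 2 * lam (k + 1 + j)) := by
      apply Summable.of_nonneg_of_le (fun j => by nlinarith [lampos (k+1+j)]) hlamtail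
      exact geo.mul_left 2
    have hs1 : Summable (fun j => ‖b j‖) :=
      Summable.of_nonneg_of_le (fun j => norm_nonneg _) hbnorm hs2
    calc ‖∑' j, b j‖ ≤ ∑' j, ‖b j‖ := norm_tsum_le_tsum_norm hs1
      _ ≤ ∑' j, 2 * lam (k + 1 + j) := Summable.tsum_le_tsum hbnorm hs1 hs2
      _ = 2 * ∑' j, lam (k + 1 + j) := tsum_mul_left
      _ ≤ 2 * (2 * lam (k+1)) := by
          have h3 := tailbound k
          nlinarith
      _ = lam k * e k / 2 := by rw [lamsucc]; ring
  have hfin : (0:ℝ) < ‖(∑' j, lam j • (σ j : X)) - ∑' j, lam j • (τ j : X)‖ := by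
    rw [hdiff, hsplit]
    have h1 : ‖a k‖ - ‖∑' j, a (j + (k+1))‖ ≤ ‖a k + ∑' j, a (j + (k+1))‖ := by
      have h2 := norm_sub_norm_le (a k) (-(∑' j, a (j + (k+1))))
      simpa [sub_neg_eq_add] using h2
    have hpos : 0 < lam k * e k := mul_pos (lampos k) (epos k)
    linarith
  have hst' : (∑' k, lam k • (σ k : X)) = ∑' k, lam k • (τ k : X) := hst
  rw [hst'] at hfin
  simp at hfin

private lemma dense_rat_smul' (M : ℕ → Set X)
    (hnet : ∀ n, ∀ y ∈ closedBall (0:X) 1, ∃ z ∈ M n, dist y z < 1/(n+1)) :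
    Dense (⋃ q : ℚ, (q:ℝ) • (⋃ n, M n)) := by
  rw [Metric.dense_iff]
  intro x r hr
  obtain ⟨q, hq⟩ := exists_rat_gt (max ‖x‖ 1)
  have hq1 : (1:ℝ) ≤ q := le_of_lt (lt_of_le_of_lt (le_max_right _ _) hq)
  have hq0 : (0:ℝ) < q := lt_of_lt_of_le one_pos hq1
  have hxq : ‖x‖ < q := lt_of_le_of_lt (le_max_left _ _) hq
  set y := (q:ℝ)⁻¹ • x with hy
  have hyb : y ∈ closedBall (0:X) 1 := by
    rw [mem_closedBall, dist_zero_right, hy, norm_smul, norm_inv, Real.norm_of_nonneg hq0.le]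
    rw [inv_mul_le_one₀ hq0]
    exact hxq.le
  obtain ⟨n, hn⟩ := exists_nat_one_div_lt (div_pos hr hq0)
  obtain ⟨z, hz, hdz⟩ := hnet n y hyb
  refine ⟨(q:ℝ) • z, ?_, ?_⟩
  · rw [mem_ball]
    have hzy : (q:ℝ) • z - x = (q:ℝ) • (z - y) := by
      rw [hy, smul_sub, smul_inv_smul₀ (ne_of_gt hq0)]
    have hqd : dist ((q:ℝ) • z) x = q * dist z y := by
      rw [dist_eq_norm, hzy, norm_smul, Real.norm_of_nonneg hq0.le, ← dist_eq_norm]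
    rw [hqd, dist_comm z y]
    calc (q:ℝ) * dist y z < q * (1/(n+1)) := by
          apply mul_lt_mul_of_pos_left hdz hq0
      _ < q * (r/q) := by
          apply mul_lt_mul_of_pos_left hn hq0
      _ = r := by field_simp
  · exact mem_iUnion.2 ⟨q, Set.smul_mem_smul_set (mem_iUnion.2 ⟨n, hz⟩)⟩

private lemma mk_rat_smul_le' (D : Set X) :
    Cardinal.mk (⋃ q : ℚ, (q:ℝ) • D) ≤ Cardinal.aleph0 * Cardinal.mk D := by
  calc Cardinal.mk (⋃ q : ℚ, (q:ℝ) • D)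
      ≤ Cardinal.sum (fun q : ℚ => Cardinal.mk (((q:ℝ) • D : Set X))) :=
        Cardinal.mk_iUnion_le_sum_mk
    _ ≤ Cardinal.sum (fun _ : ℚ => Cardinal.mk D) := by
        apply Cardinal.sum_le_sum
        intro q
        exact Cardinal.mk_image_le
    _ = Cardinal.mk ℚ * Cardinal.mk D := by rw [Cardinal.sum_const']
    _ = Cardinal.aleph0 * Cardinal.mk D := by rw [Cardinal.mk_denumerable]

end Aux

/-- The density character of a topological space: the least cardinality of a dense subset. -/
noncomputable def densChar (X : Type) [TopologicalSpace X] : Cardinal :=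
  sInf {c : Cardinal | ∃ s : Set X, Dense s ∧ Cardinal.mk s = c}

private lemma densChar_exists (X : Type) [TopologicalSpace X] :
    ∃ s : Set X, Dense s ∧ Cardinal.mk s = densChar X := by
  have hne : {c : Cardinal | ∃ s : Set X, Dense s ∧ Cardinal.mk s = c}.Nonempty :=
    ⟨Cardinal.mk (univ : Set X), univ, dense_univ, rfl⟩
  exact csInf_mem hne

private lemma densChar_le' {X : Type} [TopologicalSpace X] (s : Set X) (hs : Dense s) :
    densChar X ≤ Cardinal.mk s :=
  csInf_le' ⟨s, hs, rfl⟩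

/-- Upper bound in a metric space. -/
private lemma card_le_densChar_pow (X : Type) [MetricSpace X] :
    Cardinal.mk X ≤ densChar X ^ Cardinal.aleph0 := by
  obtain ⟨s, hs, hcard⟩ := densChar_exists X
  have hch : ∀ x : X, ∀ n : ℕ, ∃ y : s, dist x (y : X) < 1/(n+1) := by
    intro x n
    have := Metric.dense_iff.1 hs x (1/(n+1)) (by positivity)
    obtain ⟨y, hy1, hy2⟩ := this
    exact ⟨⟨y, hy2⟩, by rwa [mem_ball'] at hy1⟩
  choose f hf using hch
  have hinj : Function.Injective f := by
    intro x y hxy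
    by_contra hne
    have hd : 0 < dist x y := dist_pos.2 hne
    obtain ⟨n, hn⟩ := exists_nat_one_div_lt (half_pos hd)
    have h1 := hf x n
    have h2 := hf y n
    rw [hxy] at h1
    have : dist x y ≤ dist x (f y n : X) + dist y (f y n : X) := dist_triangle_right _ _ _
    have hh : (1:ℝ)/(n+1) < dist x y / 2 := hn
    linarith
  calc Cardinal.mk X ≤ Cardinal.mk (ℕ → s) := Cardinal.mk_le_of_injective hinj
    _ = Cardinal.mk s ^ Cardinal.aleph0 := by
        rw [← Cardinal.power_def, Cardinal.mk_nat]
    _ = densChar X ^ Cardinal.aleph0 := by rw [hcard]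

private lemma aleph0_power_aleph0' : (Cardinal.aleph0) ^ Cardinal.aleph0 = 2 ^ Cardinal.aleph0 := by
  apply le_antisymm
  · calc aleph0 ^ aleph0 ≤ ((2:Cardinal)^aleph0) ^ aleph0 :=
          power_le_power_right (le_of_lt (aleph0_lt_continuum))
        _ = 2 ^ (aleph0 * aleph0) := by rw [← power_mul]
        _ = 2 ^ aleph0 := by rw [aleph0_mul_aleph0]
  · exact power_le_power_right (nat_lt_aleph0 2).le

/-- For every infinite-dimensional real Banach space `X`,
`card X = (dens X) ^ ℵ₀`. -/
theorem stmt5 (X : Type) [NormedAddCommGroup X] [NormedSpace ℝ X] [CompleteSpace X]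
    (hinf : ¬ FiniteDimensional ℝ X) :
    Cardinal.mk X = densChar X ^ Cardinal.aleph0 := by
  refine le_antisymm (card_le_densChar_pow X) ?_
  classical
  -- maximal separated sets
  have hM : ∀ n : ℕ, ∃ M : Set X, M ⊆ closedBall 0 1 ∧
      (∀ x ∈ M, ∀ y ∈ M, x ≠ y → (1:ℝ)/(n+1) ≤ dist x y) ∧
      (∀ y ∈ closedBall (0:X) 1, ∃ z ∈ M, dist y z < 1/(n+1)) := by
    intro n
    exact exists_maximal_sep' X (1/(n+1)) (by positivity)
  choose M hMb hMs hMnet using hM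
  have hMne : ∀ n, ∃ z, z ∈ M n := by
    intro n
    obtain ⟨z, hz, _⟩ := hMnet n 0 (by simp)
    exact ⟨z, hz⟩
  -- index bookkeeping
  let p : ℕ ≃ ℕ × ℕ := (Denumerable.eqv (ℕ × ℕ)).symm
  let g : ℕ → ℕ := fun k => (p k).1
  have hgsurj : ∀ n, ∃ k, g k = n := fun n => ⟨p.symm (n,0), by simp [g]⟩
  let T := ∀ k, (M (g k) : Set X)
  have hTne : Nonempty T := ⟨fun k => ⟨(hMne (g k)).choose, (hMne (g k)).choose_spec⟩⟩
  obtain ⟨σ0⟩ := hTne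
  -- each M n injects into T
  have hMle : ∀ n, Cardinal.mk (M n) ≤ Cardinal.mk T := by
    intro n
    obtain ⟨k0, hk0⟩ := hgsurj n
    have hinj : Function.Injective
        (fun (x : M n) => (fun k => if h : g k = n then ⟨(x : X), by rw [h]; exact x.2⟩
          else σ0 k : T)) := by
      intro x y hxy
      have h1 := congrFun hxy k0
      simp only [hk0, dif_pos] at h1
      simp only [Subtype.mk.injEq] at h1
      exact Subtype.ext h1
    exact Cardinal.mk_le_of_injective hinj
  -- the dense set
  have hE := dense_rat_smul' M hMnet
  have hDle : Cardinal.mk (⋃ n, M n) ≤ Cardinal.aleph0 * Cardinal.mk T := by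
    calc Cardinal.mk (⋃ n, M n) ≤ Cardinal.sum (fun n => Cardinal.mk (M n)) :=
          Cardinal.mk_iUnion_le_sum_mk
      _ ≤ Cardinal.sum (fun _ : ℕ => Cardinal.mk T) := Cardinal.sum_le_sum _ _ hMle
      _ = Cardinal.aleph0 * Cardinal.mk T := by rw [Cardinal.sum_const', Cardinal.mk_nat]
  have hdle : densChar X ≤ Cardinal.aleph0 * Cardinal.mk T := by
    refine le_trans (densChar_le' _ hE) ?_
    refine le_trans (mk_rat_smul_le' _) ?_
    calc Cardinal.aleph0 * Cardinal.mk (⋃ n, M n)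
        ≤ Cardinal.aleph0 * (Cardinal.aleph0 * Cardinal.mk T) := by
          exact mul_le_mul_right hDle _
      _ = Cardinal.aleph0 * Cardinal.mk T := by
          rw [← mul_assoc, Cardinal.aleph0_mul_aleph0]
  -- tree bound
  have htree : ∀ h : ℕ → ℕ, Cardinal.mk (∀ k, (M (h k) : Set X)) ≤ Cardinal.mk X := by
    intro h
    obtain ⟨Φ, hΦ⟩ := tree_inj' M hMb hMs h
    exact Cardinal.mk_le_of_injective hΦ
  -- power bound
  have hTpow : Cardinal.mk T ^ Cardinal.aleph0 ≤ Cardinal.mk X := by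
    have h1 : Cardinal.mk T ^ Cardinal.aleph0 = Cardinal.mk (ℕ → T) := by
      rw [← Cardinal.power_def, Cardinal.mk_nat]
    let q : ℕ ≃ (Σ _ : ℕ, ℕ) := p.trans (Equiv.sigmaEquivProd ℕ ℕ).symm
    have h2 : Cardinal.mk (ℕ → T) = Cardinal.mk (∀ x : (Σ _ : ℕ, ℕ), (M (g x.2) : Set X)) :=
      (Cardinal.mk_congr (Equiv.piCurry (fun _ b => (M (g b) : Set X)))).symm
    have h3 : Cardinal.mk (∀ x : (Σ _ : ℕ, ℕ), (M (g x.2) : Set X)) =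
        Cardinal.mk (∀ k : ℕ, (M (g (q k).2) : Set X)) := by
      apply Cardinal.mk_congr
      exact Equiv.piCongrLeft' (fun x : (Σ _ : ℕ, ℕ) => (M (g x.2) : Set X)) q.symm
    rw [h1, h2, h3]
    exact htree (fun k => g (q k).2)
  -- the continuum lower bound
  have hx0 : ∃ x : X, x ≠ 0 := by
    by_contra hc
    push_neg at hc
    have : Subsingleton X := ⟨fun a b => (hc a).trans (hc b).symm⟩
    exact hinf (by infer_instance)
  have hcont : (2:Cardinal) ^ Cardinal.aleph0 ≤ Cardinal.mk X := by
    obtain ⟨x0, hx0⟩ := hx0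
    have hinj : Function.Injective (fun r : ℝ => r • x0) := by
      intro r s hrs
      by_contra hne
      have : (r - s) • x0 = 0 := by
        rw [sub_smul]
        simp only at hrs
        rw [hrs, sub_self]
      rcases smul_eq_zero.1 this with h | h
      · exact hne (sub_eq_zero.1 h)
      · exact hx0 h
    have := Cardinal.mk_le_of_injective hinj
    rwa [Cardinal.mk_real, ← Cardinal.two_power_aleph0] at this
  -- conclude
  calc densChar X ^ Cardinal.aleph0
      ≤ (Cardinal.aleph0 * Cardinal.mk T) ^ Cardinal.aleph0 := power_le_power_right hdle
    _ = Cardinal.aleph0 ^ Cardinal.aleph0 * Cardinal.mk T ^ Cardinal.aleph0 := by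
        rw [Cardinal.mul_power]
    _ = 2 ^ Cardinal.aleph0 * Cardinal.mk T ^ Cardinal.aleph0 := by rw [aleph0_power_aleph0']
    _ ≤ Cardinal.mk X * Cardinal.mk X := mul_le_mul' hcont hTpow
    _ = Cardinal.mk X := Cardinal.mul_eq_self
        (le_trans (Cardinal.aleph0_le_continuum.trans_eq Cardinal.two_power_aleph0.symm) hcont)
end

section
/- If X is λ-separably injective, then X is 3λ-complemented in every Banach superspace Z for which the quotient Z/X is separable: there exists a bounded linear projection P : Z → X with ‖P‖ ≤ 3λ. -/
/-- A Banach space `Z` is `λ`-separably injective. -/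
def IsSepInjective (lam : ℝ) (Z : Type) [NormedAddCommGroup Z] [NormedSpace ℝ Z] : Prop :=
  ∀ (Y : Type) [NormedAddCommGroup Y] [NormedSpace ℝ Y] [CompleteSpace Y]
    [TopologicalSpace.SeparableSpace Y]
    (W : Subspace ℝ Y), IsClosed (W : Set Y) →
    ∀ T : W →L[ℝ] Z, ∃ S : Y →L[ℝ] Z, (∀ w : W, S w = T w) ∧ ‖S‖ ≤ lam * ‖T‖

set_option maxHeartbeats 1000000 in
/-- If `X` is `λ`-separably injective, then `X` is `3λ`-complemented in every Banach
superspace `Z` with `Z/X` separable. -/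
theorem stmt11 (X : Type) [NormedAddCommGroup X] [NormedSpace ℝ X] [CompleteSpace X]
    (lam : ℝ) (hlam : 1 ≤ lam) (hX : IsSepInjective lam X)
    (Z : Type) [NormedAddCommGroup Z] [NormedSpace ℝ Z] [CompleteSpace Z]
    (ι : X →ₗᵢ[ℝ] Z)
    (hsep : TopologicalSpace.SeparableSpace (Z ⧸ LinearMap.range ι.toLinearMap)) :
    ∃ P : Z →L[ℝ] X, ‖P‖ ≤ 3 * lam ∧ ∀ x : X, P (ι x) = x := by
  classical
  set N : Submodule ℝ Z := LinearMap.range ι.toLinearMap with hNdef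
  have hNclosed : IsClosed (N : Set Z) := by
    have h1 : (N : Set Z) = Set.range ι := by
      rw [hNdef, LinearMap.coe_range, LinearIsometry.coe_toLinearMap]
    rw [h1]
    exact ι.isometry.isClosedEmbedding.isClosed_range
  haveI : IsClosed (N : Set Z) := hNclosed
  -- controlled lifts through the quotient map
  have lift_ex : ∀ (q : Z ⧸ N) (ε : ℝ), 0 < ε →
      ∃ z : Z, (Submodule.Quotient.mk z : Z ⧸ N) = q ∧ ‖z‖ ≤ (1 + ε) * ‖q‖ := by
    intro q ε hε
    by_cases hq : q = 0
    · refine ⟨0, by simp [hq], by simp [hq]⟩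
    · have hq' : 0 < ‖q‖ := norm_pos_iff.mpr hq
      obtain ⟨z, hz1, hz2⟩ := Submodule.Quotient.norm_mk_lt q (mul_pos hε hq')
      exact ⟨z, hz1, by nlinarith⟩
  have lift_ex' : ∀ (q : Z ⧸ N) (m : ℕ),
      ∃ z : Z, (Submodule.Quotient.mk z : Z ⧸ N) = q ∧
        ‖z‖ ≤ (1 + 1 / (m + 1)) * ‖q‖ := by
    intro q m
    exact lift_ex q (1 / (m + 1)) (by positivity)
  choose g hg1 hg2 using lift_ex'
  -- a countable dense subgroup of the quotient
  obtain ⟨D, Dcount, Ddense⟩ := TopologicalSpace.exists_countable_dense (Z ⧸ N)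
  have Dne : D.Nonempty := Ddense.nonempty
  obtain ⟨v, hv⟩ := Set.Countable.exists_eq_range Dcount Dne
  set Ksub : Submodule ℤ (Z ⧸ N) := Submodule.span ℤ (Set.range v) with hKsub
  set K : AddSubgroup (Z ⧸ N) := Ksub.toAddSubgroup with hK
  have hKdense : Dense (K : Set (Z ⧸ N)) := by
    apply Ddense.mono
    rw [hv]
    exact Submodule.subset_span
  -- the separable subspace S of Z
  haveI : Countable Ksub := inferInstance
  set A : Set Z := Set.range (fun p : Ksub × ℕ => g (p.1 : Z ⧸ N) p.2) with hA
  have Acount : A.Countable := Set.countable_range _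
  set S : Submodule ℝ Z := (Submodule.span ℝ A).topologicalClosure with hS
  have hAS : A ⊆ (S : Set Z) := fun a ha =>
    Submodule.le_topologicalClosure _ (Submodule.subset_span ha)
  have hSclosed : IsClosed (S : Set Z) := Submodule.isClosed_topologicalClosure _
  haveI : CompleteSpace S := hSclosed.completeSpace_coe
  haveI : TopologicalSpace.SeparableSpace S := by
    have : TopologicalSpace.IsSeparable (S : Set Z) := by
      rw [hS]
      exact ((Acount.isSeparable).span).closure
    exact this.separableSpace
  -- the quotient map restricted to S, as a NormedAddGroupHom
  set f : NormedAddGroupHom S (Z ⧸ N) :=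
    { toFun := fun s => Submodule.Quotient.mk (s : Z)
      map_add' := fun a b => by simp
      bound' := ⟨1, fun s => by
        simpa using Submodule.Quotient.norm_mk_le N (s : Z)⟩ } with hf
  have hyp_m : ∀ m : ℕ, f.SurjectiveOnWith K (1 + 1 / (m + 1)) := by
    intro m h hh
    have hhK : h ∈ Ksub := hh
    have hmem : g h m ∈ S := hAS ⟨(⟨h, hhK⟩, m), rfl⟩
    exact ⟨⟨g h m, hmem⟩, hg1 h m, hg2 h m⟩
  -- controlled surjectivity of f onto the whole quotient
  have key : ∀ (h : Z ⧸ N) (ε : ℝ), 0 < ε →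
      ∃ s : S, (Submodule.Quotient.mk (s : Z) : Z ⧸ N) = h ∧ ‖(s : Z)‖ ≤ (1 + ε) * ‖h‖ := by
    intro h ε hε
    obtain ⟨m, hm⟩ := exists_nat_one_div_lt (show (0:ℝ) < ε / 2 by linarith)
    have hC : (0:ℝ) < 1 + 1 / (m + 1) := by positivity
    have hmemcl : h ∈ K.topologicalClosure := by
      have : h ∈ closure (K : Set (Z ⧸ N)) := by
        rw [hKdense.closure_eq]; trivial
      exact this
    obtain ⟨s, hs1, hs2⟩ :=
      controlled_closure_of_complete hC (show (0:ℝ) < ε / 2 by linarith) (hyp_m m) h hmemcl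
    refine ⟨s, hs1, ?_⟩
    have hnorm : ‖s‖ = ‖(s : Z)‖ := rfl
    rw [hnorm] at hs2
    have h1 : (1 + 1 / (m + 1 : ℝ) + ε / 2) ≤ 1 + ε := by linarith
    have := norm_nonneg h
    nlinarith
  -- the subspace W = S ∩ N of S, and the operator T : W → X inverting ι
  set W : Submodule ℝ S := N.comap S.subtype with hW
  have hWclosed : IsClosed (W : Set S) :=
    hNclosed.preimage continuous_subtype_val
  set e : X ≃ₗ[ℝ] LinearMap.range ι.toLinearMap :=
    LinearEquiv.ofInjective ι.toLinearMap ι.injective with he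
  have hesymm : ∀ n : N, ι (e.symm n) = (n : Z) := by
    intro n
    have h0 := LinearEquiv.ofInjective_symm_apply (f := ι.toLinearMap) (h := ι.injective) n
    exact h0
  set j : W →ₗ[ℝ] N :=
    LinearMap.codRestrict N (S.subtype.comp W.subtype) (fun w => w.2) with hj
  set Tlin : W →ₗ[ℝ] X := (e.symm : N →ₗ[ℝ] X).comp j with hTlin
  have hTι : ∀ w : W, ι (Tlin w) = ((w : S) : Z) := by
    intro w
    have := hesymm (j w)
    exact this
  have hTnorm : ∀ w : W, ‖Tlin w‖ ≤ 1 * ‖w‖ := by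
    intro w
    rw [one_mul]
    apply le_of_eq
    calc ‖Tlin w‖ = ‖ι (Tlin w)‖ := (ι.norm_map _).symm
      _ = ‖((w : S) : Z)‖ := by rw [hTι w]
      _ = ‖w‖ := rfl
  set T : W →L[ℝ] X := Tlin.mkContinuous 1 hTnorm with hT
  have hTbound : ‖T‖ ≤ 1 := Tlin.mkContinuous_norm_le zero_le_one hTnorm
  obtain ⟨E, hE1, hE2⟩ := hX S W hWclosed T
  have hlam0 : (0:ℝ) ≤ lam := le_trans zero_le_one hlam
  have hEnorm : ‖E‖ ≤ lam := by
    calc ‖E‖ ≤ lam * ‖T‖ := hE2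
      _ ≤ lam * 1 := by
        exact mul_le_mul_of_nonneg_left hTbound hlam0
      _ = lam := mul_one lam
  have hEW : ∀ w : W, E (w : S) = Tlin w := by
    intro w
    rw [hE1 w, hT]
    rfl
  -- decomposition maps
  have σex : ∀ z : Z, ∃ s : S,
      (Submodule.Quotient.mk (s : Z) : Z ⧸ N) = Submodule.Quotient.mk z :=
    fun z => ⟨(key (Submodule.Quotient.mk z) 1 one_pos).choose,
      (key (Submodule.Quotient.mk z) 1 one_pos).choose_spec.1⟩
  choose σ hσ using σex
  have hmemN : ∀ z : Z, z - ((σ z : S) : Z) ∈ N := by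
    intro z
    have := (Submodule.Quotient.eq N).mp (hσ z)
    simpa using N.neg_mem this
  set τ : Z → X := fun z => e.symm ⟨z - ((σ z : S) : Z), hmemN z⟩ with hτdef
  have hτ : ∀ z : Z, ι (τ z) = z - ((σ z : S) : Z) := by
    intro z
    exact hesymm _
  -- well-definedness: the candidate projection agrees on all decompositions
  have wd : ∀ (z : Z) (x : X) (s : S), z = ι x + (s : Z) →
      τ z + E (σ z) = x + E s := by
    intro z x s hz
    have hmem : ((s - σ z : S) : Z) ∈ N := by
      refine ⟨τ z - x, ?_⟩
      have h1 : ι (τ z - x) = ((s : Z) - ((σ z : S) : Z)) := by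
        rw [map_sub, hτ z, hz]; abel
      simpa using h1
    set w : W := ⟨s - σ z, hmem⟩ with hwdef
    have hEw : E (s - σ z) = τ z - x := by
      have h1 : E ((w : S)) = Tlin w := hEW w
      have h2 : ι (Tlin w) = ((s : Z) - ((σ z : S) : Z)) := by
        rw [hTι w]; rfl
      have h3 : ι (Tlin w) = ι (τ z - x) := by
        rw [h2, map_sub, hτ z, hz]; abel
      have h4 : Tlin w = τ z - x := ι.injective h3
      rw [hwdef] at h1
      rw [← h4, ← h1]
    have h5 : E s = E (s - σ z) + E (σ z) := by
      rw [← map_add]; congr 1; abel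
    rw [h5, hEw]; abel
  -- the linear projection
  set P₀ : Z →ₗ[ℝ] X :=
    { toFun := fun z => τ z + E (σ z)
      map_add' := fun a b => by
        show τ (a + b) + E (σ (a + b)) = (τ a + E (σ a)) + (τ b + E (σ b))
        have hdec : a + b = ι (τ a + τ b) + ((σ a + σ b : S) : Z) := by
          rw [map_add]
          have := hτ a; have := hτ b
          push_cast
          rw [hτ a, hτ b]; abel
        have := wd (a + b) (τ a + τ b) (σ a + σ b) hdec
        rw [this, map_add]; abel
      map_smul' := fun c a => by
        show τ (c • a) + E (σ (c • a)) = c • (τ a + E (σ a))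
        have hdec : c • a = ι (c • τ a) + ((c • σ a : S) : Z) := by
          rw [map_smul]
          push_cast
          rw [hτ a]
          rw [smul_sub]; abel
        have := wd (c • a) (c • τ a) (c • σ a) hdec
        rw [this, map_smul]
        simp [smul_add] } with hP₀
  have hP₀apply : ∀ z : Z, P₀ z = τ z + E (σ z) := fun z => rfl
  -- the norm bound
  have bound : ∀ z : Z, ‖P₀ z‖ ≤ (2 + lam) * ‖z‖ := by
    intro z
    have hz0 : (0:ℝ) ≤ ‖z‖ := norm_nonneg z
    refine le_of_forall_pos_le_add ?_
    intro δ hδ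
    have hlam1 : (0:ℝ) < 1 + lam := by linarith
    set ε : ℝ := δ / ((1 + lam) * (‖z‖ + 1)) with hε
    have hεpos : 0 < ε := by positivity
    obtain ⟨s, hs1, hs2⟩ := key (Submodule.Quotient.mk z) ε hεpos
    have hxmem : z - (s : Z) ∈ N := by
      have := (Submodule.Quotient.eq N).mp hs1
      simpa using N.neg_mem this
    set x : X := e.symm ⟨z - (s : Z), hxmem⟩ with hx
    have hιx : ι x = z - (s : Z) := hesymm _
    have hdec : z = ι x + (s : Z) := by rw [hιx]; abel
    have hPz : P₀ z = x + E s := by rw [hP₀apply]; exact wd z x s hdec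
    have hnx : ‖x‖ = ‖z - (s : Z)‖ := by rw [← ι.norm_map x, hιx]
    have hns : ‖(s : Z)‖ ≤ (1 + ε) * ‖z‖ := by
      calc ‖(s : Z)‖ ≤ (1 + ε) * ‖(Submodule.Quotient.mk z : Z ⧸ N)‖ := hs2
        _ ≤ (1 + ε) * ‖z‖ := by
          apply mul_le_mul_of_nonneg_left (Submodule.Quotient.norm_mk_le N z)
          linarith
    have hEs : ‖E s‖ ≤ lam * ‖(s : Z)‖ := by
      calc ‖E s‖ ≤ ‖E‖ * ‖s‖ := E.le_opNorm s
        _ ≤ lam * ‖s‖ := mul_le_mul_of_nonneg_right hEnorm (norm_nonneg s)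
        _ = lam * ‖(s : Z)‖ := rfl
    have hεδ : ε * ((1 + lam) * (‖z‖ + 1)) = δ := by
      rw [hε]
      field_simp
    have hstep : ‖P₀ z‖ ≤ ‖z‖ + (1 + lam) * ((1 + ε) * ‖z‖) := by
      rw [hPz]
      calc ‖x + E s‖ ≤ ‖x‖ + ‖E s‖ := norm_add_le _ _
        _ ≤ ‖z - (s : Z)‖ + lam * ‖(s : Z)‖ := by rw [hnx]; linarith
        _ ≤ (‖z‖ + ‖(s : Z)‖) + lam * ‖(s : Z)‖ := by
          have := norm_sub_le z (s : Z); linarith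
        _ = ‖z‖ + (1 + lam) * ‖(s : Z)‖ := by ring
        _ ≤ ‖z‖ + (1 + lam) * ((1 + ε) * ‖z‖) := by
          have h6 : (1 + lam) * ‖(s : Z)‖ ≤ (1 + lam) * ((1 + ε) * ‖z‖) :=
            mul_le_mul_of_nonneg_left hns (le_of_lt hlam1)
          linarith
    have hfinal : ‖z‖ + (1 + lam) * ((1 + ε) * ‖z‖) ≤ (2 + lam) * ‖z‖ + δ := by
      have h1 : (1 + lam) * ((1 + ε) * ‖z‖) = (1 + lam) * ‖z‖ + ε * ((1 + lam) * ‖z‖) := by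
        ring
      have h2 : ε * ((1 + lam) * ‖z‖) ≤ δ := by
        have h3 : (1 + lam) * ‖z‖ ≤ (1 + lam) * (‖z‖ + 1) :=
          mul_le_mul_of_nonneg_left (by linarith) (le_of_lt hlam1)
        calc ε * ((1 + lam) * ‖z‖) ≤ ε * ((1 + lam) * (‖z‖ + 1)) :=
              mul_le_mul_of_nonneg_left h3 (le_of_lt hεpos)
          _ = δ := hεδ
      linarith
    linarith
  set P : Z →L[ℝ] X := P₀.mkContinuous (2 + lam) bound with hP
  refine ⟨P, ?_, ?_⟩
  · have h1 : ‖P‖ ≤ 2 + lam :=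
      P₀.mkContinuous_norm_le (by linarith) bound
    linarith
  · intro x
    have hdec : ι x = ι x + ((0 : S) : Z) := by simp
    have : P₀ (ι x) = x + E 0 := by rw [hP₀apply]; exact wd (ι x) x 0 hdec
    have h2 : P (ι x) = P₀ (ι x) := rfl
    rw [h2, this, map_zero, add_zero]
end

section
/- If a Banach space X is λ-complemented in every superspace Z such that Z/X is separable, then X is λ-separably injective: every bounded linear operator from a closed subspace of a separable Banach space into X extends with norm at most λ times the original. -/
private lemma norm_one_prod {X Y : Type} [SeminormedAddCommGroup X] [SeminormedAddCommGroup Y]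
    (f : WithLp 1 (X × Y)) : ‖f‖ = ‖f.fst‖ + ‖f.snd‖ := by
  have := WithLp.prod_norm_eq_add (p := 1) (by norm_num) f
  simpa using this

section aux

variable {X Y : Type} [NormedAddCommGroup X] [NormedSpace ℝ X]
  [NormedAddCommGroup Y] [NormedSpace ℝ Y]

/-- Inclusion of `X` into the ℓ¹-sum, as a linear map. -/
private def inlL : X →ₗ[ℝ] WithLp 1 (X × Y) where
  toFun x := (WithLp.equiv 1 (X × Y)).symm (x, 0)
  map_add' x y := by rw [← show ∀ a b : X × Y, (WithLp.equiv 1 (X × Y)).symm (a + b) = (WithLp.equiv 1 (X × Y)).symm a + (WithLp.equiv 1 (X × Y)).symm b from fun _ _ => rfl]; norm_num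
  map_smul' c x := by rw [← show ∀ (r : ℝ) (a : X × Y), (WithLp.equiv 1 (X × Y)).symm (r • a) = r • (WithLp.equiv 1 (X × Y)).symm a from fun _ _ => rfl]; norm_num

private def inrL : Y →ₗ[ℝ] WithLp 1 (X × Y) where
  toFun y := (WithLp.equiv 1 (X × Y)).symm (0, y)
  map_add' x y := by rw [← show ∀ a b : X × Y, (WithLp.equiv 1 (X × Y)).symm (a + b) = (WithLp.equiv 1 (X × Y)).symm a + (WithLp.equiv 1 (X × Y)).symm b from fun _ _ => rfl]; norm_num
  map_smul' c x := by rw [← show ∀ (r : ℝ) (a : X × Y), (WithLp.equiv 1 (X × Y)).symm (r • a) = r • (WithLp.equiv 1 (X × Y)).symm a from fun _ _ => rfl]; norm_num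

@[simp] private lemma inlL_fst (x : X) : (inlL (Y := Y) x).fst = x := rfl
@[simp] private lemma inlL_snd (x : X) : (inlL (Y := Y) x).snd = 0 := rfl
@[simp] private lemma inrL_fst (y : Y) : (inrL (X := X) y).fst = 0 := rfl
@[simp] private lemma inrL_snd (y : Y) : (inrL (X := X) y).snd = y := rfl

@[simp] private lemma norm_inlL (x : X) : ‖inlL (Y := Y) x‖ = ‖x‖ := by
  rw [norm_one_prod]; simp

@[simp] private lemma norm_inrL (y : Y) : ‖inrL (X := X) y‖ = ‖y‖ := by
  rw [norm_one_prod]; simp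

private lemma inl_add_inr (e : WithLp 1 (X × Y)) : inlL e.fst + inrL e.snd = e := by
  apply (WithLp.equiv 1 (X × Y)).injective
  rw [show ∀ a b : WithLp 1 (X × Y), WithLp.equiv 1 (X × Y) (a + b) = WithLp.equiv 1 (X × Y) a + WithLp.equiv 1 (X × Y) b from fun _ _ => rfl]
  show ((e.fst, (0:Y)) : X × Y) + ((0:X), e.snd) = (e.fst, e.snd)
  simp

end aux

set_option maxHeartbeats 1000000 in
set_option synthInstance.maxHeartbeats 400000 in
/-- If a Banach space `X` is `λ`-complemented in every Banach superspace `Z` with `Z/X`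
separable, then `X` is `λ`-separably injective: every bounded linear operator from a
closed subspace of a separable Banach space into `X` extends with norm at most `λ`
times the original. -/
theorem stmt12 (X : Type) [NormedAddCommGroup X] [NormedSpace ℝ X] [CompleteSpace X]
    (lam : ℝ) (hlam : 1 ≤ lam)
    (hcompl : ∀ (Z : Type) [NormedAddCommGroup Z] [NormedSpace ℝ Z] [CompleteSpace Z]
      (ι : X →ₗᵢ[ℝ] Z),
      TopologicalSpace.SeparableSpace (Z ⧸ LinearMap.range ι.toLinearMap) →
      ∃ P : Z →L[ℝ] X, ‖P‖ ≤ lam ∧ ∀ x : X, P (ι x) = x) :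
    ∀ (Y : Type) [NormedAddCommGroup Y] [NormedSpace ℝ Y] [CompleteSpace Y]
      [TopologicalSpace.SeparableSpace Y]
      (W : Subspace ℝ Y), IsClosed (W : Set Y) →
      ∀ T : W →L[ℝ] X, ∃ S : Y →L[ℝ] X, (∀ w : W, S w = T w) ∧ ‖S‖ ≤ lam * ‖T‖ := by
  intro Y _ _ _ _ W hW T
  by_cases hT : T = 0
  · refine ⟨0, fun w => by simp [hT], ?_⟩
    have h0 : (0:ℝ) ≤ lam := le_trans zero_le_one hlam
    simp only [hT, norm_zero]
    exact mul_nonneg h0 (ContinuousLinearMap.opNorm_nonneg _)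
  -- normalize
  have hTpos : 0 < ‖T‖ := by
    rcases (norm_nonneg T).lt_or_eq with h | h
    · exact h
    · exact absurd ((ContinuousLinearMap.opNorm_zero_iff T).mp h.symm) hT
  set T' : W →L[ℝ] X := (‖T‖⁻¹ : ℝ) • T with hT'def
  have hT'bd : ∀ w : W, ‖T' w‖ ≤ ‖w‖ := by
    intro w
    have h1 : ‖T w‖ ≤ ‖T‖ * ‖w‖ := T.le_opNorm w
    have : ‖T' w‖ = ‖T‖⁻¹ * ‖T w‖ := by
      rw [hT'def, ContinuousLinearMap.smul_apply, norm_smul, Real.norm_eq_abs,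
        abs_of_nonneg (inv_nonneg.mpr (ContinuousLinearMap.opNorm_nonneg T))]
    rw [this]
    calc ‖T‖⁻¹ * ‖T w‖ ≤ ‖T‖⁻¹ * (‖T‖ * ‖w‖) := by gcongr
      _ = ‖w‖ := by field_simp
  -- the pushout space
  set g : W →ₗ[ℝ] WithLp 1 (X × Y) :=
    LinearMap.comp inlL (T' : W →ₗ[ℝ] X) - LinearMap.comp inrL (W.subtype) with hg
  have hgapp : ∀ w : W, g w = inlL (T' w) - inrL (w : Y) := fun w => rfl
  set N : Submodule ℝ (WithLp 1 (X × Y)) := (LinearMap.range g).topologicalClosure with hN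
  haveI hNc : IsClosed (N : Set (WithLp 1 (X × Y))) := Submodule.isClosed_topologicalClosure _
  set Z := WithLp 1 (X × Y) ⧸ N with hZ
  -- key lower bound
  have key : ∀ (x : X) (v : WithLp 1 (X × Y)), v - inlL x ∈ N → ‖x‖ ≤ ‖v‖ := by
    intro x v hv
    have hsub : (N : Set (WithLp 1 (X × Y))) ⊆ {e : WithLp 1 (X × Y) | ‖x‖ ≤ ‖inlL x + e‖} := by
      have hC : IsClosed {e : WithLp 1 (X × Y) | ‖x‖ ≤ ‖inlL x + e‖} :=
        isClosed_le continuous_const ((continuous_const.add continuous_id).norm)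
      have hsub0 : (LinearMap.range g : Set (WithLp 1 (X × Y))) ⊆ {e : WithLp 1 (X × Y) | ‖x‖ ≤ ‖inlL x + e‖} := by
        intro e he
        obtain ⟨w, rfl⟩ := he
        rw [hgapp]
        simp only [Set.mem_setOf_eq]
        have h1 : inlL x + (inlL (T' w) - inrL (w:Y)) = inlL (x + T' w) - inrL (w:Y) := by
          rw [map_add]; abel
        rw [h1]
        have h2 : ‖inlL (x + T' w) - inrL (w:Y)‖ = ‖x + T' w‖ + ‖(w:Y)‖ := by
          rw [norm_one_prod]
          simp [norm_sub_rev]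
        rw [h2]
        have h3 : ‖x‖ ≤ ‖x + T' w‖ + ‖T' w‖ := by
          calc ‖x‖ = ‖x + T' w - T' w‖ := by rw [add_sub_cancel_right]
            _ ≤ ‖x + T' w‖ + ‖T' w‖ := norm_sub_le _ _
        have h4 := hT'bd w
        have h5 : ‖(w : Y)‖ = ‖w‖ := rfl
        linarith
      rw [hN, Submodule.topologicalClosure_coe]
      exact closure_minimal hsub0 hC
    have h := hsub hv
    simp only [Set.mem_setOf_eq] at h
    have h2 : inlL x + (v - inlL x) = v := by abel
    rw [h2] at h
    exact h
  -- isometric embedding of X into Z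
  let ι : X →ₗᵢ[ℝ] Z :=
    { toLinearMap := N.mkQ.comp inlL
      norm_map' := fun x => by
        apply le_antisymm
        · simpa [Submodule.mkQ_apply, norm_inlL] using
            Submodule.Quotient.norm_mk_le N (inlL (Y := Y) x)
        · refine le_of_forall_pos_le_add fun ε hε => ?_
          obtain ⟨m, hm, hlt⟩ :=
            Submodule.Quotient.norm_mk_lt ((N.mkQ.comp inlL) x) hε
          have hmem : m - inlL x ∈ N := by
            rw [← Submodule.Quotient.eq]
            exact hm
          have := key x m hmem
          linarith }
  have hιapp : ∀ x : X, (ι x : Z) = N.mkQ (inlL x) := fun x => rfl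
  -- continuous linear maps into Z
  let inrC : Y →L[ℝ] WithLp 1 (X × Y) := LinearMap.mkContinuous inrL 1 (fun y => by rw [norm_inrL, one_mul])
  let mkQc : WithLp 1 (X × Y) →L[ℝ] Z := LinearMap.mkContinuous N.mkQ 1 (fun m => by
    rw [one_mul]; exact Submodule.Quotient.norm_mk_le N m)
  let ιY : Y →L[ℝ] Z := mkQc.comp inrC
  have hιYapp : ∀ y : Y, ιY y = N.mkQ (inrL y) := fun y => rfl
  have hιYbd : ∀ y : Y, ‖ιY y‖ ≤ ‖y‖ := by
    intro y
    rw [hιYapp, Submodule.mkQ_apply]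
    simpa [Submodule.mkQ_apply, norm_inrL] using
      Submodule.Quotient.norm_mk_le N (inrL (X := X) y)
  -- separability of Z / X
  haveI hsep : TopologicalSpace.SeparableSpace (Z ⧸ LinearMap.range ι.toLinearMap) := by
    set R := LinearMap.range ι.toLinearMap with hR
    have hcont : Continuous (fun y : Y => R.mkQ (ιY y)) :=
      R.isOpenQuotientMap_mkQ.continuous.comp ιY.continuous
    have hsurj : Function.Surjective (fun y : Y => R.mkQ (ιY y)) := by
      intro z'
      obtain ⟨z, rfl⟩ := Submodule.Quotient.mk_surjective R z'
      obtain ⟨e, rfl⟩ := Submodule.Quotient.mk_surjective N z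
      refine ⟨e.snd, ?_⟩
      simp only [Submodule.mkQ_apply]
      rw [Submodule.Quotient.eq]
      refine ⟨-e.fst, ?_⟩
      have he : inlL (-e.fst) = inrL e.snd - e := by
        rw [map_neg]
        nth_rewrite 3 [← inl_add_inr e]
        abel
      show (Submodule.Quotient.mk (inlL (-e.fst)) : Z) =
        ιY e.snd - Submodule.Quotient.mk e
      rw [he, hιYapp, Submodule.mkQ_apply, ← Submodule.Quotient.mk_sub]
    exact hsurj.denseRange.separableSpace hcont
  obtain ⟨P, hPnorm, hPid⟩ := hcompl Z ι hsep
  refine ⟨(‖T‖ : ℝ) • (P.comp ιY), ?_, ?_⟩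
  · intro w
    have hmem : inrL (w : Y) - inlL (T' w) ∈ N := by
      rw [hN]
      apply Submodule.le_topologicalClosure
      refine ⟨-w, ?_⟩
      rw [map_neg, hgapp, neg_sub]
    have heq : ιY (w : Y) = ι (T' w) := by
      rw [hιYapp, hιapp, Submodule.mkQ_apply, Submodule.mkQ_apply,
        Submodule.Quotient.eq]
      exact hmem
    rw [ContinuousLinearMap.smul_apply, ContinuousLinearMap.comp_apply, heq, hPid,
      hT'def, ContinuousLinearMap.smul_apply, smul_smul,
      mul_inv_cancel₀ hTpos.ne', one_smul]
  · apply ContinuousLinearMap.opNorm_le_bound _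
      (mul_nonneg (le_trans zero_le_one hlam) hTpos.le)
    intro y
    rw [ContinuousLinearMap.smul_apply, norm_smul, Real.norm_eq_abs,
      abs_of_nonneg hTpos.le]
    calc ‖T‖ * ‖(P.comp ιY) y‖ ≤ ‖T‖ * (lam * ‖y‖) := by
          apply mul_le_mul_of_nonneg_left ?_ hTpos.le
          calc ‖(P.comp ιY) y‖ ≤ ‖P‖ * ‖ιY y‖ := P.le_opNorm _
            _ ≤ lam * ‖y‖ := by
                apply mul_le_mul hPnorm (hιYbd y) (norm_nonneg _)
                  (le_trans zero_le_one hlam)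
      _ = lam * ‖T‖ * ‖y‖ := by ring
end

section
/- A Banach space X satisfies: every bounded operator into X from a subspace of a normed space of cardinality ≤ card(X) extends with norm at most λ·(original norm) for some uniform λ depending only on X, if and only if X is complemented in every superspace of the same cardinality. -/
set_option synthInstance.maxHeartbeats 1000000
set_option maxHeartbeats 1000000

open scoped Classical

namespace Stmt14Aux

section CNorm

variable {ι : Type} [DecidableEq ι] {E : ι → Type} [∀ i, NormedAddCommGroup (E i)]

/-- The `ℓ¹` norm on the finitely supported direct sum. -/
noncomputable def cnorm (f : Π₀ i, E i) : ℝ := ∑ i ∈ f.support, ‖f i‖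

theorem cnorm_eq_sum {f : Π₀ i, E i} {s : Finset ι} (h : f.support ⊆ s) :
    cnorm f = ∑ i ∈ s, ‖f i‖ := by
  refine Finset.sum_subset h fun i _ hi => ?_
  rw [DFinsupp.notMem_support_iff.mp hi, norm_zero]

theorem cnorm_nonneg (f : Π₀ i, E i) : 0 ≤ cnorm f :=
  Finset.sum_nonneg fun i _ => norm_nonneg _

theorem sum_norm_le_cnorm (f : Π₀ i, E i) (s : Finset ι) :
    ∑ i ∈ s, ‖f i‖ ≤ cnorm f := by
  rw [cnorm_eq_sum (Finset.subset_union_right (s₁ := s))]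
  exact Finset.sum_le_sum_of_subset_of_nonneg Finset.subset_union_left
    (fun i _ _ => norm_nonneg _)

theorem cnorm_single (i : ι) (x : E i) : cnorm (DFinsupp.single i x) = ‖x‖ := by
  rw [cnorm_eq_sum (DFinsupp.support_single_subset), Finset.sum_singleton,
    DFinsupp.single_eq_same]

theorem cnorm_zero : cnorm (0 : Π₀ i, E i) = 0 := by
  simp [cnorm]

theorem cnorm_add_le (f g : Π₀ i, E i) : cnorm (f + g) ≤ cnorm f + cnorm g := by
  rw [cnorm_eq_sum (DFinsupp.support_add (g₁ := f) (g₂ := g)),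
    cnorm_eq_sum (Finset.subset_union_left (s₂ := g.support)),
    cnorm_eq_sum (Finset.subset_union_right (s₁ := f.support)), ← Finset.sum_add_distrib]
  exact Finset.sum_le_sum fun i _ => by rw [DFinsupp.add_apply]; exact norm_add_le _ _

theorem cnorm_neg (f : Π₀ i, E i) : cnorm (-f) = cnorm f := by
  rw [cnorm_eq_sum (f := -f) (s := f.support) (by rw [DFinsupp.support_neg]), cnorm]
  exact Finset.sum_congr rfl fun i _ => by rw [DFinsupp.neg_apply, norm_neg]

theorem cnorm_eq_zero {f : Π₀ i, E i} (h : cnorm f = 0) : f = 0 := by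
  ext i
  have h1 : ‖f i‖ ≤ cnorm f := by
    simpa using sum_norm_le_cnorm f {i}
  rw [h] at h1
  have : ‖f i‖ = 0 := le_antisymm h1 (norm_nonneg _)
  simpa [norm_eq_zero] using this

end CNorm

section CNormSmul

variable {ι : Type} [DecidableEq ι] {E : ι → Type} [∀ i, NormedAddCommGroup (E i)]
  [∀ i, NormedSpace ℝ (E i)]

theorem cnorm_smul_le (c : ℝ) (f : Π₀ i, E i) : cnorm (c • f) ≤ ‖c‖ * cnorm f := by
  rw [cnorm_eq_sum (f := c • f) (s := f.support) (DFinsupp.support_smul c f)]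
  calc ∑ i ∈ f.support, ‖(c • f) i‖ ≤ ∑ i ∈ f.support, ‖c‖ * ‖f i‖ :=
        Finset.sum_le_sum fun i _ => by rw [DFinsupp.smul_apply]; exact norm_smul_le _ _
    _ = ‖c‖ * cnorm f := by rw [cnorm, ← Finset.mul_sum]

/-- The normed group structure on the finitely supported direct sum. -/
noncomputable instance : NormedAddCommGroup (Π₀ i, E i) :=
  AddGroupNorm.toNormedAddCommGroup
    { toFun := cnorm
      map_zero' := cnorm_zero
      add_le' := cnorm_add_le
      neg' := cnorm_neg
      eq_zero_of_map_eq_zero' := fun _ => cnorm_eq_zero }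

theorem norm_def (f : Π₀ i, E i) : ‖f‖ = cnorm f := rfl

noncomputable instance : NormedSpace ℝ (Π₀ i, E i) :=
  ⟨fun c f => cnorm_smul_le c f⟩

end CNormSmul

section Glide

variable (X : Type) [NormedAddCommGroup X] [NormedSpace ℝ X]
variable (Y : ℕ → Type) [∀ n, NormedAddCommGroup (Y n)] [∀ n, NormedSpace ℝ (Y n)]
variable (Z : ∀ n, Subspace ℝ (Y n)) (T : ∀ n, (Z n) →L[ℝ] X)

/-- The index family: `none ↦ X`, `some n ↦ Y n`. -/
def Fam (o : Option ℕ) : Type := o.elim X Y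

noncomputable instance instFamGrp (o : Option ℕ) : NormedAddCommGroup (Fam X Y o) :=
  match o with
  | none => inferInstanceAs (NormedAddCommGroup X)
  | some n => inferInstanceAs (NormedAddCommGroup (Y n))

noncomputable instance instFamMod (o : Option ℕ) : NormedSpace ℝ (Fam X Y o) :=
  match o with
  | none => inferInstanceAs (NormedSpace ℝ X)
  | some n => inferInstanceAs (NormedSpace ℝ (Y n))

/-- The `c₀₀`-style `ℓ¹` direct sum of `X` and the `Y n`. -/
abbrev Amb : Type := Π₀ o, Fam X Y o

/-- The gluing maps: `z ↦ e_{some n} z - e_none (T n z)`. -/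
noncomputable def theta (n : ℕ) : (Z n) →ₗ[ℝ] Amb X Y :=
  (DFinsupp.lsingle (R := ℝ) (M := Fam X Y) (some n)).comp (Z n).subtype
    - (DFinsupp.lsingle (R := ℝ) (M := Fam X Y) none).comp (T n).toLinearMap

/-- The subspace to quotient by. -/
noncomputable def NN : Submodule ℝ (Amb X Y) :=
  LinearMap.range (DFinsupp.lsum ℕ (theta X Y Z T))

noncomputable def NNc : Submodule ℝ (Amb X Y) := (NN X Y Z T).topologicalClosure

variable {X Y Z T} in
theorem mem_NNc_of_mem_NN {v : Amb X Y} (h : v ∈ NN X Y Z T) : v ∈ NNc X Y Z T :=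
  Submodule.le_topologicalClosure _ h

instance : IsClosed ((NNc X Y Z T : Submodule ℝ (Amb X Y)) : Set (Amb X Y)) :=
  Submodule.isClosed_topologicalClosure _

/-- The pushout-amalgam space. -/
abbrev Wsp : Type := Amb X Y ⧸ NNc X Y Z T

variable {X Y Z T} in
theorem key (hT : ∀ n, ‖T n‖ ≤ 1) (x : X) :
    ∀ v ∈ NNc X Y Z T, ‖x‖ ≤ ‖DFinsupp.single (β := Fam X Y) none x - v‖ := by
  intro v hv
  have hsub : (NNc X Y Z T : Set (Amb X Y)) ⊆
      {v : Amb X Y | ‖x‖ ≤ ‖DFinsupp.single (β := Fam X Y) none x - v‖} := by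
    rw [NNc, Submodule.topologicalClosure_coe]
    refine closure_minimal ?_
      (isClosed_le continuous_const ((continuous_const.sub continuous_id).norm))
    rintro v ⟨g, rfl⟩
    have hvformula : DFinsupp.lsum ℕ (theta X Y Z T) g
        = ∑ n ∈ g.support, theta X Y Z T n (g n) := by
      rw [DFinsupp.lsum_apply_apply, DFinsupp.sumAddHom_apply]
      rfl
    set s : Finset ℕ := g.support with hs
    set c : X := ∑ n ∈ s, ((T n) (g n) : X) with hc
    set u : Amb X Y := DFinsupp.single (β := Fam X Y) none x
        - DFinsupp.lsum ℕ (theta X Y Z T) g with hu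
    have hunone : u none = x + c := by
      erw [hu, hvformula, DFinsupp.sub_apply, DFinsupp.finset_sum_apply,
        DFinsupp.single_eq_same]
      have : ∀ n ∈ s, (theta X Y Z T n (g n)) none = -((T n) (g n) : X) := by
        intro n _
        simp [theta, DFinsupp.sub_apply, DFinsupp.single_eq_same,
          DFinsupp.single_eq_of_ne (Ne.symm (Option.some_ne_none n)), ContinuousLinearMap.coe_coe]
        erw [LinearMap.comp_apply, LinearMap.comp_apply, DFinsupp.lsingle_apply,
          DFinsupp.lsingle_apply, DFinsupp.single_eq_of_ne (Ne.symm (Option.some_ne_none n)),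
          DFinsupp.single_eq_same]
        exact zero_sub _
      erw [Finset.sum_congr rfl this, Finset.sum_neg_distrib, sub_neg_eq_add, hc]
      rfl
    have husome : ∀ n ∈ s, u (some n) = -((g n : Y n)) := by
      intro n hn
      have hsum : ∑ m ∈ s, (theta X Y Z T m (g m)) (some n) = ((g n : Y n)) := by
        have hterm : ∀ m ∈ s, (theta X Y Z T m (g m)) (some n)
            = (DFinsupp.single (β := Fam X Y) (some m) ((g m : Y m))) (some n) := by
          intro m _
          simp [theta, DFinsupp.sub_apply, DFinsupp.single_apply,
            DFinsupp.single_eq_of_ne (Option.some_ne_none n),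
            Submodule.coe_subtype]
          erw [LinearMap.comp_apply, LinearMap.comp_apply, DFinsupp.lsingle_apply,
            DFinsupp.lsingle_apply, DFinsupp.single_eq_of_ne (Option.some_ne_none n), sub_zero]
          rfl
        rw [Finset.sum_congr rfl hterm,
          Finset.sum_eq_single n
            (fun m _ hmn => DFinsupp.single_eq_of_ne (by simpa using Ne.symm hmn))
            (fun hns => absurd hn hns)]
        exact DFinsupp.single_eq_same
      erw [hu, hvformula, DFinsupp.sub_apply, DFinsupp.finset_sum_apply,
        DFinsupp.single_eq_of_ne (Option.some_ne_none n), hsum, zero_sub]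
      rfl
    have hnc : ‖c‖ ≤ ∑ n ∈ s, ‖g n‖ := by
      refine (norm_sum_le _ _).trans (Finset.sum_le_sum fun n _ => ?_)
      calc ‖((T n) (g n) : X)‖ ≤ ‖T n‖ * ‖g n‖ := (T n).le_opNorm _
        _ ≤ 1 * ‖g n‖ := by
            exact mul_le_mul_of_nonneg_right (hT n) (norm_nonneg _)
        _ = ‖g n‖ := one_mul _
    have hfin : ‖u none‖ + ∑ n ∈ s, ‖u (some n)‖ ≤ ‖u‖ := by
      have h1 : ∑ i ∈ insert (none : Option ℕ) (s.image some), ‖u i‖ ≤ cnorm u :=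
        sum_norm_le_cnorm u _
      rw [Finset.sum_insert (by simp), Finset.sum_image
        (fun m _ n _ h => Option.some.inj h)] at h1
      exact h1
    have hx : ‖x‖ ≤ ‖x + c‖ + ‖c‖ := by
      calc ‖x‖ = ‖(x + c) - c‖ := by rw [add_sub_cancel_right]
        _ ≤ ‖x + c‖ + ‖c‖ := norm_sub_le _ _
    refine hx.trans (le_trans ?_ hfin)
    rw [hunone]
    refine add_le_add_right (hnc.trans (le_of_eq (Finset.sum_congr rfl fun n hn => ?_))) _
    erw [husome n hn, norm_neg (g n : Y n)]
    rfl
  exact hsub hv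

/-- The canonical isometric embedding of `X` into the amalgam space. -/
noncomputable def jmap (hT : ∀ n, ‖T n‖ ≤ 1) : X →ₗᵢ[ℝ] Wsp X Y Z T where
  toLinearMap := (NNc X Y Z T).mkQ.comp (DFinsupp.lsingle (R := ℝ) (M := Fam X Y) none)
  norm_map' := by
    intro x
    show ‖(NNc X Y Z T).mkQ (DFinsupp.single (β := Fam X Y) none x)‖ = ‖x‖
    refine le_antisymm ?_ ?_
    · calc ‖(NNc X Y Z T).mkQ (DFinsupp.single (β := Fam X Y) none x)‖
          ≤ ‖DFinsupp.single (β := Fam X Y) none x‖ :=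
            Submodule.Quotient.norm_mk_le _ _
        _ = ‖x‖ := by erw [norm_def, cnorm_single]; rfl
    · refine le_of_forall_pos_le_add fun ε hε => ?_
      obtain ⟨m, hm, hlt⟩ := Submodule.Quotient.norm_mk_lt
        ((NNc X Y Z T).mkQ (DFinsupp.single (β := Fam X Y) none x)) hε
      have hq : Submodule.Quotient.mk (p := NNc X Y Z T) m
          = Submodule.Quotient.mk (DFinsupp.single (β := Fam X Y) none x) := hm
      have hmem : DFinsupp.single (β := Fam X Y) none x - m ∈ NNc X Y Z T := by
        have h2 := (Submodule.Quotient.eq (NNc X Y Z T)).mp hq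
        simpa [neg_sub] using neg_mem h2
      have hkey := key hT x _ hmem
      have hm2 : DFinsupp.single (β := Fam X Y) none x
          - (DFinsupp.single (β := Fam X Y) none x - m) = m := by abel
      rw [hm2] at hkey
      exact hkey.trans hlt.le

theorem jmap_apply (hT : ∀ n, ‖T n‖ ≤ 1) (x : X) :
    jmap X Y Z T hT x = (NNc X Y Z T).mkQ (DFinsupp.single (β := Fam X Y) none x) := rfl

theorem mk_Amb_le [Infinite X] (hY : ∀ n, Cardinal.mk (Y n) ≤ Cardinal.mk X) :
    Cardinal.mk (Amb X Y) ≤ Cardinal.mk X := by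
  have haux : ∀ f g : Amb X Y,
      (f.support.attach.image fun i => (⟨i.1, f i.1⟩ : Σ o, Fam X Y o))
        = (g.support.attach.image fun i => (⟨i.1, g i.1⟩ : Σ o, Fam X Y o)) →
      ∀ i, f i ≠ 0 → f i = g i := by
    intro f g h i hfi
    have hmem : (⟨i, f i⟩ : Σ o, Fam X Y o)
        ∈ f.support.attach.image fun j => (⟨j.1, f j.1⟩ : Σ o, Fam X Y o) :=
      Finset.mem_image.mpr ⟨⟨i, DFinsupp.mem_support_iff.mpr hfi⟩, Finset.mem_attach _ _, rfl⟩
    rw [h] at hmem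
    obtain ⟨j, _, hj⟩ := Finset.mem_image.mp hmem
    obtain ⟨h1, h2⟩ := Sigma.mk.inj_iff.mp hj
    subst h1
    exact (heq_iff_eq.mp h2).symm
  have hinj : Function.Injective (fun f : Amb X Y =>
      f.support.attach.image fun i => (⟨i.1, f i.1⟩ : Σ o, Fam X Y o)) := by
    intro f g h
    ext i
    by_cases hf : f i = 0
    · by_cases hg : g i = 0
      · rw [hf, hg]
      · exact (haux g f h.symm i hg).symm
    · exact haux f g h i hf
  haveI : Infinite (Fam X Y none) := inferInstanceAs (Infinite X)
  haveI : Infinite (Σ o, Fam X Y o) :=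
    Infinite.of_injective (Sigma.mk (none : Option ℕ)) sigma_mk_injective
  calc Cardinal.mk (Amb X Y) ≤ Cardinal.mk (Finset (Σ o, Fam X Y o)) :=
        Cardinal.mk_le_of_injective hinj
    _ = Cardinal.mk (Σ o, Fam X Y o) := Cardinal.mk_finset_of_infinite _
    _ = Cardinal.sum (fun o => Cardinal.mk (Fam X Y o)) := Cardinal.mk_sigma _
    _ ≤ Cardinal.sum (fun _ : Option ℕ => Cardinal.mk X) :=
        Cardinal.sum_le_sum _ _ (fun o => by
          cases o with
          | none => exact le_of_eq rfl
          | some n => exact hY n)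
    _ = Cardinal.mk (Option ℕ) * Cardinal.mk X := Cardinal.sum_const' _ _
    _ ≤ Cardinal.mk X * Cardinal.mk X :=
        mul_le_mul_left (Cardinal.mk_le_aleph0.trans (Cardinal.aleph0_le_mk X)) _
    _ = Cardinal.mk X := Cardinal.mul_eq_self (Cardinal.aleph0_le_mk X)

theorem mk_Wsp [Infinite X] (hT : ∀ n, ‖T n‖ ≤ 1)
    (hY : ∀ n, Cardinal.mk (Y n) ≤ Cardinal.mk X) :
    Cardinal.mk (Wsp X Y Z T) = Cardinal.mk X :=
  le_antisymm
    ((Cardinal.mk_le_of_surjective (Submodule.Quotient.mk_surjective (NNc X Y Z T))).trans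
      (mk_Amb_le X Y hY))
    (Cardinal.mk_le_of_injective (jmap X Y Z T hT).injective)

theorem glide [Infinite X] (hT : ∀ n, ‖T n‖ ≤ 1)
    (hY : ∀ n, Cardinal.mk (Y n) ≤ Cardinal.mk X)
    (H : ∀ (Y' : Type) [NormedAddCommGroup Y'] [NormedSpace ℝ Y'] (ι : X →ₗᵢ[ℝ] Y'),
      Cardinal.mk Y' = Cardinal.mk X → ∃ P : Y' →L[ℝ] X, ∀ x : X, P (ι x) = x) :
    ∃ C : ℝ, ∀ n, ∃ S : Y n →L[ℝ] X, (∀ z : Z n, S z = (T n) z) ∧ ‖S‖ ≤ C := by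
  obtain ⟨P, hP⟩ := H (Wsp X Y Z T) (jmap X Y Z T hT) (mk_Wsp X Y Z T hT hY)
  refine ⟨‖P‖, fun n => ?_⟩
  have hbound : ∀ y : Y n,
      ‖(NNc X Y Z T).mkQ.comp (DFinsupp.lsingle (R := ℝ) (M := Fam X Y) (some n)) y‖
        ≤ 1 * ‖y‖ := by
    intro y
    show ‖Submodule.Quotient.mk (p := NNc X Y Z T)
      (DFinsupp.single (β := Fam X Y) (some n) y)‖ ≤ 1 * ‖y‖
    rw [one_mul]
    exact (Submodule.Quotient.norm_mk_le _ _).trans (le_of_eq (cnorm_single _ _))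
  set L : Y n →L[ℝ] Wsp X Y Z T := LinearMap.mkContinuous
    ((NNc X Y Z T).mkQ.comp (DFinsupp.lsingle (R := ℝ) (M := Fam X Y) (some n))) 1 hbound
    with hL
  refine ⟨P.comp L, fun z => ?_, ?_⟩
  · have hmem : DFinsupp.single (β := Fam X Y) (some n) (z : Y n)
        - DFinsupp.single (β := Fam X Y) none ((T n) z) ∈ NNc X Y Z T := by
      refine mem_NNc_of_mem_NN (LinearMap.mem_range.mpr ⟨DFinsupp.single n z, ?_⟩)
      rw [DFinsupp.lsum_single]
      rfl
    have hLz : L z = (jmap X Y Z T hT) ((T n) z) := by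
      rw [jmap_apply]
      show (NNc X Y Z T).mkQ (DFinsupp.single (β := Fam X Y) (some n) (z : Y n)) = _
      rw [Submodule.mkQ_apply, Submodule.mkQ_apply]
      exact (Submodule.Quotient.eq _).mpr hmem
    rw [ContinuousLinearMap.comp_apply, hLz, hP]
  · calc ‖P.comp L‖ ≤ ‖P‖ * ‖L‖ := ContinuousLinearMap.opNorm_comp_le _ _
      _ ≤ ‖P‖ * 1 :=
          mul_le_mul_of_nonneg_left (LinearMap.mkContinuous_norm_le _ zero_le_one _)
            (norm_nonneg _)
      _ = ‖P‖ := mul_one _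

end Glide

/-- A witness that the uniform extension constant `n + 1` fails for `X`. -/
structure Bad (X : Type) [NormedAddCommGroup X] [NormedSpace ℝ X] (n : ℕ) where
  Y : Type
  [grp : NormedAddCommGroup Y]
  [mod : NormedSpace ℝ Y]
  card_le : Cardinal.mk Y ≤ Cardinal.mk X
  Z : Subspace ℝ Y
  T : Z →L[ℝ] X
  normT : ‖T‖ ≤ 1
  bad : ∀ S : Y →L[ℝ] X, (∀ z : Z, S z = T z) → ¬(‖S‖ ≤ (n : ℝ) + 1)

attribute [instance] Bad.grp Bad.mod

theorem nonempty_bad {X : Type} [NormedAddCommGroup X] [NormedSpace ℝ X] (n : ℕ)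
    (Y : Type) [NormedAddCommGroup Y] [NormedSpace ℝ Y]
    (hc : Cardinal.mk Y ≤ Cardinal.mk X)
    (Z : Subspace ℝ Y) (T : Z →L[ℝ] X)
    (h : ∀ S : Y →L[ℝ] X, (∀ z : Z, S z = T z) → ¬(‖S‖ ≤ ((n : ℝ) + 1) * ‖T‖)) :
    Nonempty (Bad X n) := by
  have hT0 : T ≠ 0 := by
    rintro rfl
    exact h 0 (fun z => by simp) (by simp; positivity)
  have hTpos : (0 : ℝ) < ‖T‖ :=
    lt_of_le_of_ne (norm_nonneg T)
      (fun e => hT0 ((ContinuousLinearMap.opNorm_zero_iff T).mp e.symm))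
  refine ⟨⟨Y, hc, Z, ‖T‖⁻¹ • T, ?_, ?_⟩⟩
  · refine (ContinuousLinearMap.opNorm_smul_le _ _).trans (le_of_eq ?_)
    rw [norm_inv, Real.norm_eq_abs, abs_of_nonneg (norm_nonneg T),
      inv_mul_cancel₀ (ne_of_gt hTpos)]
  · intro S hS hle
    refine h (‖T‖ • S) (fun z => ?_) ?_
    · rw [ContinuousLinearMap.smul_apply, hS z, ContinuousLinearMap.smul_apply, smul_smul,
        mul_inv_cancel₀ (ne_of_gt hTpos), one_smul]
    · refine (ContinuousLinearMap.opNorm_smul_le _ _).trans ?_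
      rw [Real.norm_eq_abs, abs_of_nonneg (norm_nonneg T)]
      calc ‖T‖ * ‖S‖ ≤ ‖T‖ * ((n : ℝ) + 1) := mul_le_mul_of_nonneg_left hle hTpos.le
        _ = ((n : ℝ) + 1) * ‖T‖ := mul_comm _ _

end Stmt14Aux

open Stmt14Aux in
/-- A Banach space `X` has the uniform extension property for operators from subspaces of
normed spaces of cardinality at most `card X` (with a uniform constant `λ` depending only
on `X`) iff `X` is complemented in every normed superspace of the same cardinality. -/
theorem stmt14 (X : Type) [NormedAddCommGroup X] [NormedSpace ℝ X] [CompleteSpace X] :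
    (∃ lam : ℝ, 0 < lam ∧
      ∀ (Y : Type) [NormedAddCommGroup Y] [NormedSpace ℝ Y],
        Cardinal.mk Y ≤ Cardinal.mk X →
        ∀ (Z : Subspace ℝ Y) (T : Z →L[ℝ] X),
          ∃ S : Y →L[ℝ] X, (∀ z : Z, S z = T z) ∧ ‖S‖ ≤ lam * ‖T‖) ↔
    (∀ (Y : Type) [NormedAddCommGroup Y] [NormedSpace ℝ Y] (ι : X →ₗᵢ[ℝ] Y),
      Cardinal.mk Y = Cardinal.mk X →
      ∃ P : Y →L[ℝ] X, ∀ x : X, P (ι x) = x) := by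
  constructor
  · rintro ⟨lam, hlam, h⟩ Y _ _ ι hcard
    obtain ⟨S, hS, -⟩ := h Y (le_of_eq hcard) (LinearMap.range ι.toLinearMap)
      (ι.equivRange.symm.toLinearIsometry.toContinuousLinearMap)
    refine ⟨S, fun x => ?_⟩
    have hmem : ι x ∈ LinearMap.range ι.toLinearMap := ⟨x, rfl⟩
    have h1 : S (ι x)
        = ι.equivRange.symm.toLinearIsometry.toContinuousLinearMap ⟨ι x, hmem⟩ :=
      hS ⟨ι x, hmem⟩
    rw [h1]
    have h2 : (⟨ι x, hmem⟩ : LinearMap.range ι.toLinearMap) = ι.equivRange x :=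
      Subtype.ext (by simp)
    show ι.equivRange.symm _ = x
    rw [h2, LinearIsometryEquiv.symm_apply_apply]
  · intro H
    rcases subsingleton_or_nontrivial X with hX | hX
    · refine ⟨1, one_pos, fun Y _ _ _ Z T => ⟨0, fun z => Subsingleton.elim _ _, ?_⟩⟩
      have h0 : ‖(0 : Y →L[ℝ] X)‖ = 0 := norm_zero
      rw [h0, one_mul]
      exact norm_nonneg T
    · haveI : Infinite X := by
        obtain ⟨x0, hx0⟩ := exists_ne (0 : X)
        refine Infinite.of_injective (fun r : ℝ => r • x0) (fun a b hab => ?_)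
        have h1 : (a - b) • x0 = 0 := by
          rw [sub_smul, sub_eq_zero]
          exact hab
        rcases smul_eq_zero.mp h1 with hr | hr
        · exact sub_eq_zero.mp hr
        · exact absurd hr hx0
      by_contra hcon
      have hbad : ∀ n : ℕ, Nonempty (Bad X n) := by
        intro n
        by_contra hne
        refine hcon ⟨(n : ℝ) + 1, by positivity, ?_⟩
        intro Y _ _ hc Z T
        by_contra hnoS
        push_neg at hnoS
        exact hne (nonempty_bad n Y hc Z T (fun S he hle => absurd hle (not_le.mpr (hnoS S he))))
      let B : ∀ n, Bad X n := fun n => (hbad n).some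
      obtain ⟨C, hC⟩ := glide X (fun n => (B n).Y) (fun n => (B n).Z) (fun n => (B n).T)
        (fun n => (B n).normT) (fun n => (B n).card_le) H
      obtain ⟨n, hn⟩ := exists_nat_ge C
      obtain ⟨S, hSe, hSn⟩ := hC n
      exact (B n).bad S hSe (hSn.trans (hn.trans (le_add_of_nonneg_right zero_le_one)))
end

section
/- If X is a closed uncomplemented subspace of a Banach space Y with card(X) = card(Y), then for every ε > 0 there exists a standard ε-isometry f : X → Y with closed linear span of f(X) equal to Y such that f is not stable: there exists no bounded linear operator T : Y → X and γ > 0 with ‖T(f(x)) − x‖ ≤ γε for all x ∈ X. -/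
noncomputable def qj {E : Type*} [NormedAddCommGroup E] [NormedSpace ℝ E] (y : E) : E :=
  (1 + ‖y‖)⁻¹ • y

lemma qj_norm {E : Type*} [NormedAddCommGroup E] [NormedSpace ℝ E] (y : E) :
    ‖qj y‖ = ‖y‖ / (1 + ‖y‖) := by
  have h : (0:ℝ) < 1 + ‖y‖ := by positivity
  rw [qj, norm_smul, Real.norm_eq_abs, abs_inv, abs_of_pos h, div_eq_inv_mul]

lemma qj_norm_le {E : Type*} [NormedAddCommGroup E] [NormedSpace ℝ E] (y : E) :
    ‖qj y‖ ≤ 1 := by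
  have h : (0:ℝ) < 1 + ‖y‖ := by positivity
  rw [qj_norm, div_le_one h]
  linarith [norm_nonneg y]

lemma qj_inj {E : Type*} [NormedAddCommGroup E] [NormedSpace ℝ E] :
    Function.Injective (qj (E := E)) := by
  intro a b h
  have ha : (0:ℝ) < 1 + ‖a‖ := by positivity
  have hb : (0:ℝ) < 1 + ‖b‖ := by positivity
  have hn : ‖a‖ = ‖b‖ := by
    have h2 : ‖a‖ / (1 + ‖a‖) = ‖b‖ / (1 + ‖b‖) := by
      rw [← qj_norm, ← qj_norm, h]
    rw [div_eq_div_iff ha.ne' hb.ne'] at h2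
    nlinarith
  rw [qj, qj, hn] at h
  have := congrArg (fun z => (1 + ‖b‖) • z) h
  simpa [smul_smul, mul_inv_cancel₀ hb.ne'] using this

/-- **Qian's counterexample.** If `X` is a closed uncomplemented subspace of a Banach
space `Y` with `card X = card Y`, then for every `ε > 0` there is a standard `ε`-isometry
`f : X → Y` whose range has dense span in `Y` which is not stable: no bounded operator
`T : Y → X` and `γ > 0` satisfy `‖T (f x) - x‖ ≤ γ ε` for all `x`. -/
theorem stmt15 (Y : Type) [NormedAddCommGroup Y] [NormedSpace ℝ Y] [CompleteSpace Y]
    (W : Subspace ℝ Y) (hW : IsClosed (W : Set Y))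
    (hcard : Cardinal.mk W = Cardinal.mk Y)
    (huncompl : ¬ ∃ P : Y →L[ℝ] W, ∀ w : W, P (w : Y) = w) :
    ∀ ε : ℝ, 0 < ε →
      ∃ f : W → Y, f 0 = 0 ∧ (∀ x y : W, |‖f x - f y‖ - ‖(x : Y) - (y : Y)‖| ≤ ε) ∧
        (Submodule.span ℝ (Set.range f)).topologicalClosure = ⊤ ∧
        ¬ ∃ (T : Y →L[ℝ] W) (γ : ℝ), 0 < γ ∧ ∀ x : W, ‖T (f x) - x‖ ≤ γ * ε := by
  classical
  intro ε hε
  -- W is nontrivial, else the zero projection works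
  by_cases hw0 : ∀ w : W, w = 0
  · exact absurd ⟨0, fun w => by simp [hw0 w, hw0 ((0 : Y →L[ℝ] W) (w : Y))]⟩ huncompl
  push_neg at hw0
  obtain ⟨w₀, hw₀⟩ := hw0
  have hw₀n : (0:ℝ) < ‖w₀‖ := norm_pos_iff.mpr hw₀
  -- bijection from cardinality
  obtain ⟨e⟩ : Nonempty (Y ≃ W) := Cardinal.eq.mp hcard.symm
  -- center of the annulus
  set c : W := ((3/2) * ‖w₀‖⁻¹) • w₀ with hc
  have hcn : ‖c‖ = 3/2 := by
    rw [hc, norm_smul, Real.norm_eq_abs, abs_of_pos (by positivity),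
      mul_assoc, inv_mul_cancel₀ hw₀n.ne', mul_one]
  -- the injection of Y into the annulus of W
  set i : Y → W := fun y => c + (4⁻¹ : ℝ) • qj (e y) with hi
  have hi_inj : Function.Injective i := by
    intro a b h
    rw [hi] at h
    simp only [add_right_inj] at h
    have := smul_right_injective W (by norm_num : (4⁻¹:ℝ) ≠ 0) h
    exact e.injective (qj_inj this)
  have hi_lb : ∀ y : Y, 5/4 ≤ ‖i y‖ := by
    intro y
    have h1 : ‖(4⁻¹ : ℝ) • qj (e y)‖ ≤ 4⁻¹ := by
      rw [norm_smul, Real.norm_eq_abs]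
      calc |(4⁻¹:ℝ)| * ‖qj (e y)‖ ≤ 4⁻¹ * 1 := by
            rw [abs_of_pos (by norm_num : (0:ℝ) < 4⁻¹)]
            exact mul_le_mul_of_nonneg_left (qj_norm_le _) (by norm_num)
        _ = 4⁻¹ := mul_one _
    calc (5/4 : ℝ) = 3/2 - 4⁻¹ := by norm_num
      _ ≤ ‖c‖ - ‖(4⁻¹ : ℝ) • qj (e y)‖ := by rw [hcn]; linarith
      _ ≤ ‖c + (4⁻¹ : ℝ) • qj (e y)‖ := by
          have h2 : ‖c‖ ≤ ‖c + (4⁻¹ : ℝ) • qj (e y)‖ + ‖(4⁻¹ : ℝ) • qj (e y)‖ := by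
            have h3 := norm_sub_le (c + (4⁻¹ : ℝ) • qj (e y)) ((4⁻¹ : ℝ) • qj (e y))
            simpa using h3
          linarith
      _ = ‖i y‖ := by rw [hi]
  have hi_ub : ∀ y : Y, ‖i y‖ ≤ 7/4 := by
    intro y
    have h1 : ‖(4⁻¹ : ℝ) • qj (e y)‖ ≤ 4⁻¹ := by
      rw [norm_smul, Real.norm_eq_abs, abs_of_pos (by norm_num : (0:ℝ) < 4⁻¹)]
      calc (4⁻¹:ℝ) * ‖qj (e y)‖ ≤ 4⁻¹ * 1 :=
            mul_le_mul_of_nonneg_left (qj_norm_le _) (by norm_num)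
        _ = 4⁻¹ := mul_one _
    calc ‖i y‖ ≤ ‖c‖ + ‖(4⁻¹ : ℝ) • qj (e y)‖ := norm_add_le _ _
      _ ≤ 3/2 + 4⁻¹ := by rw [hcn]; linarith
      _ = 7/4 := by norm_num
  -- partial inverse
  set s : W → Y := Function.invFun i with hs
  have hsi : ∀ y : Y, s (i y) = y := Function.leftInverse_invFun hi_inj
  -- the perturbation
  set φ : W → Y := fun x => if x ∈ Set.range i then (ε/2) • qj (s x) else 0 with hφ
  have hφ_le : ∀ x : W, ‖φ x‖ ≤ ε/2 := by
    intro x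
    rw [hφ]
    by_cases hx : x ∈ Set.range i
    · simp only [hx, if_true]
      rw [norm_smul, Real.norm_eq_abs, abs_of_pos (by positivity : (0:ℝ) < ε/2)]
      calc ε/2 * ‖qj (s x)‖ ≤ ε/2 * 1 :=
            mul_le_mul_of_nonneg_left (qj_norm_le _) (by positivity)
        _ = ε/2 := mul_one _
    · simp only [hx, if_false, norm_zero]
      positivity
  set f : W → Y := fun x => (x : Y) + φ x with hf
  refine ⟨f, ?_, ?_, ?_, ?_⟩
  · -- f 0 = 0
    have h0 : (0 : W) ∉ Set.range i := by
      rintro ⟨y, hy⟩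
      have := hi_lb y
      rw [hy] at this
      simp at this
      linarith
    have hφ0 : φ 0 = 0 := by simp only [hφ]; rw [if_neg h0]
    simp [hf, hφ0]
  · -- ε-isometry
    intro x y
    have key : ‖(f x - f y) - ((x : Y) - (y : Y))‖ ≤ ε := by
      have : (f x - f y) - ((x : Y) - (y : Y)) = φ x - φ y := by
        simp only [hf]; abel
      rw [this]
      calc ‖φ x - φ y‖ ≤ ‖φ x‖ + ‖φ y‖ := norm_sub_le _ _
        _ ≤ ε/2 + ε/2 := add_le_add (hφ_le x) (hφ_le y)
        _ = ε := by ring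
    exact le_trans (abs_norm_sub_norm_le _ _) key
  · -- dense span
    have hWmem : ∀ x : W, (x : Y) ∈ Submodule.span ℝ (Set.range f) := by
      have hout : ∀ x : W, x ∉ Set.range i → (x : Y) ∈ Submodule.span ℝ (Set.range f) := by
        intro x hx
        have hφx : φ x = 0 := by simp only [hφ]; rw [if_neg hx]
        have : f x = (x : Y) := by simp [hf, hφx]
        rw [← this]
        exact Submodule.subset_span ⟨x, rfl⟩
      intro x
      by_cases hx : x ∈ Set.range i
      · have hx' : (2⁻¹ : ℝ) • x ∉ Set.range i := by
          rintro ⟨y, hy⟩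
          have h1 := hi_lb y
          have h2 : ‖(2⁻¹ : ℝ) • x‖ = 2⁻¹ * ‖x‖ := by
            rw [norm_smul, Real.norm_eq_abs, abs_of_pos]; norm_num
          rw [hy, h2] at h1
          obtain ⟨z, hz⟩ := hx
          have h3 := hi_ub z
          rw [hz] at h3
          linarith
        have h4 := hout _ hx'
        have h5 : (x : Y) = (2 : ℝ) • (((2⁻¹ : ℝ) • x : W) : Y) := by
          rw [Submodule.coe_smul, smul_smul]
          norm_num
        rw [h5]
        exact Submodule.smul_mem _ _ h4
      · exact hout x hx
    have hspan : Submodule.span ℝ (Set.range f) = ⊤ := by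
      rw [eq_top_iff]
      intro v _
      have hball : (ε/2) • qj v ∈ Submodule.span ℝ (Set.range f) := by
        have hfi : f (i v) = (i v : Y) + (ε/2) • qj v := by
          have hm : i v ∈ Set.range i := ⟨v, rfl⟩
          simp only [hf, hφ, if_pos hm, hsi v]
        have h1 : f (i v) ∈ Submodule.span ℝ (Set.range f) :=
          Submodule.subset_span ⟨i v, rfl⟩
        have h2 := hWmem (i v)
        have : (ε/2) • qj v = f (i v) - (i v : Y) := by rw [hfi]; abel
        rw [this]
        exact Submodule.sub_mem _ h1 h2
      have hv : v = ((2/ε) * (1 + ‖v‖)) • ((ε/2) • qj v) := by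
        have h1 : (0:ℝ) < 1 + ‖v‖ := by positivity
        rw [qj, smul_smul, smul_smul]
        have hk : 2 / ε * (1 + ‖v‖) * (ε / 2) * (1 + ‖v‖)⁻¹ = 1 := by
          field_simp
        rw [hk, one_smul]
      rw [hv]
      exact Submodule.smul_mem _ _ hball
    rw [hspan]
    exact top_le_iff.mp (Submodule.le_topologicalClosure ⊤)
  · -- not stable
    rintro ⟨T, γ, hγ, hT⟩
    set C : ℝ := γ * ε + ‖T‖ * (ε/2) with hC
    have hbd : ∀ x : W, ‖T (x : Y) - x‖ ≤ C := by
      intro x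
      have h1 : T (f x) = T (x : Y) + T (φ x) := by
        rw [hf]; exact map_add T _ _
      have h2 : ‖T (φ x)‖ ≤ ‖T‖ * (ε/2) :=
        le_trans (T.le_opNorm _) (mul_le_mul_of_nonneg_left (hφ_le x) (norm_nonneg T))
      have h3 : T (x : Y) - x = (T (f x) - x) - T (φ x) := by rw [h1]; abel
      calc ‖T (x : Y) - x‖ = ‖(T (f x) - x) - T (φ x)‖ := by rw [h3]
        _ ≤ ‖T (f x) - x‖ + ‖T (φ x)‖ := norm_sub_le _ _
        _ ≤ γ * ε + ‖T‖ * (ε/2) := add_le_add (hT x) h2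
    have hproj : ∀ x : W, T (x : Y) = x := by
      intro x
      by_contra hne
      have hd : (0:ℝ) < ‖T (x : Y) - x‖ := by
        rw [norm_pos_iff, sub_ne_zero]
        exact hne
      obtain ⟨n, hn⟩ := exists_nat_gt (C / ‖T (x : Y) - x‖)
      have hkey := hbd ((n : ℝ) • x)
      have h3 : T (((n : ℝ) • x : W) : Y) - ((n : ℝ) • x : W) = (n : ℝ) • (T (x : Y) - x) := by
        rw [Submodule.coe_smul, map_smul, smul_sub]
      rw [h3, norm_smul, Real.norm_eq_abs, abs_of_nonneg (Nat.cast_nonneg n)] at hkey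
      have h4 : C / ‖T (x : Y) - x‖ < (n : ℝ) := hn
      have h5 : C < (n : ℝ) * ‖T (x : Y) - x‖ := by
        rwa [div_lt_iff₀ hd] at h4
      linarith
    exact huncompl ⟨T, hproj⟩
end

section
/- Let X be a Banach space, Y a Banach space, (x*_n) a weak*-null sequence in the dual unit ball of X*, and (φ_n) a sequence in the unit ball of Y* such that |⟨φ_n, f(x)⟩ − ⟨x*_n, x⟩| ≤ 4ε for all x ∈ X and all n, where f : X → Y is any map. If Y is separable, then setting K = {ψ ∈ B_{Y*} : |⟨ψ, f(x)⟩| ≤ 4ε for all x ∈ X}, the weak*-distance from φ_n to K tends to 0; in particular there exists a sequence ψ_n ∈ K with φ_n − ψ_n → 0 in the weak* topology of Y*. -/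
open NormedSpace Filter

/-- Key compactness step: if `(x*_n)` is a weak*-null sequence in `B_{X*}`, `(φ_n) ⊆ B_{Y*}`
satisfies `|⟨φ_n, f x⟩ - ⟨x*_n, x⟩| ≤ 4ε` for all `x, n`, and `Y` is separable, then with
`K = {ψ ∈ B_{Y*} : |⟨ψ, f x⟩| ≤ 4ε ∀ x}` there is a sequence `ψ_n ∈ K` with
`φ_n - ψ_n → 0` in the weak* topology of `Y*`. -/
theorem stmt18 (X Y : Type) [NormedAddCommGroup X] [NormedSpace ℝ X] [CompleteSpace X]
    [NormedAddCommGroup Y] [NormedSpace ℝ Y] [CompleteSpace Y]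
    [TopologicalSpace.SeparableSpace Y]
    (ε : ℝ) (hε : 0 ≤ ε) (f : X → Y)
    (x' : ℕ → StrongDual ℝ X) (hx'ball : ∀ n, ‖x' n‖ ≤ 1)
    (hx'null : ∀ x : X, Tendsto (fun n => x' n x) atTop (nhds 0))
    (φ : ℕ → StrongDual ℝ Y) (hφball : ∀ n, ‖φ n‖ ≤ 1)
    (hφ : ∀ (n : ℕ) (x : X), |φ n (f x) - x' n x| ≤ 4 * ε) :
    ∃ ψ : ℕ → StrongDual ℝ Y,
      (∀ n, ψ n ∈ {ψ : StrongDual ℝ Y | ‖ψ‖ ≤ 1 ∧ ∀ x : X, |ψ (f x)| ≤ 4 * ε}) ∧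
      ∀ y : Y, Tendsto (fun n => φ n y - ψ n y) atTop (nhds 0) := by
  classical
  set K : Set (StrongDual ℝ Y) := {ψ : StrongDual ℝ Y | ‖ψ‖ ≤ 1 ∧ ∀ x : X, |ψ (f x)| ≤ 4 * ε} with hKdef
  have hK0 : (0 : StrongDual ℝ Y) ∈ K := by
    refine ⟨by simp, fun x => ?_⟩
    simp only [ContinuousLinearMap.zero_apply, abs_zero]
    positivity
  have : Nonempty Y := ⟨0⟩
  set y : ℕ → Y := TopologicalSpace.denseSeq Y with hydef
  have hy : DenseRange y := TopologicalSpace.denseRange_denseSeq Y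
  -- the weak* sequence
  set Φ : ℕ → WeakDual ℝ Y := fun n => StrongDual.toWeakDual (φ n) with hΦdef
  have hΦapp : ∀ n (z : Y), Φ n z = φ n z := fun n z => rfl
  -- Key claim via Banach–Alaoglu compactness
  have key : ∀ (m : ℕ) (δ : ℝ), 0 < δ → ∀ᶠ n in atTop,
      ∃ ψ ∈ K, ∀ k < m, |φ n (y k) - ψ (y k)| ≤ δ := by
    intro m δ hδ
    by_contra hcon
    rw [Filter.not_eventually] at hcon
    set B : Set ℕ := {n | ¬ ∃ ψ ∈ K, ∀ k < m, |φ n (y k) - ψ (y k)| ≤ δ} with hBdef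
    have hLne : (atTop ⊓ 𝓟 B).NeBot := Filter.frequently_iff_neBot.1 hcon
    set L : Filter ℕ := atTop ⊓ 𝓟 B with hLdef
    have hLatTop : L ≤ atTop := inf_le_left
    have hBL : B ∈ L := le_principal_iff.1 inf_le_right
    set F : Filter (WeakDual ℝ Y) := Filter.map Φ L with hFdef
    have hFne : F.NeBot := Filter.map_neBot
    -- the compact ball
    have hcomp : IsCompact (WeakDual.toStrongDual ⁻¹'
        Metric.closedBall (0 : StrongDual ℝ Y) 1 : Set (WeakDual ℝ Y)) :=
      WeakDual.isCompact_closedBall (𝕜 := ℝ) (E := Y) 0 1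
    have hFle : F ≤ 𝓟 (WeakDual.toStrongDual ⁻¹'
        Metric.closedBall (0 : StrongDual ℝ Y) 1) := by
      rw [le_principal_iff, Filter.mem_map]
      refine Filter.univ_mem' fun n => ?_
      simp only [Set.mem_preimage, Metric.mem_closedBall, dist_zero_right]
      exact hφball n
    obtain ⟨ψw, hψwmem, hψwcl⟩ := hcomp.exists_clusterPt hFle
    set ψ : StrongDual ℝ Y := WeakDual.toStrongDual ψw with hψdef
    have hψnorm : ‖ψ‖ ≤ 1 := by
      simpa [dist_zero_right] using hψwmem
    have hψapp : ∀ z : Y, ψ z = ψw z := fun z => rfl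
    -- ψ ∈ K
    have hψK : ψ ∈ K := by
      refine ⟨hψnorm, fun x => ?_⟩
      have hg : Continuous fun χ : WeakDual ℝ Y => χ (f x) :=
        WeakDual.eval_continuous (f x)
      have hcl : ClusterPt (ψw (f x)) (Filter.map (fun χ : WeakDual ℝ Y => χ (f x)) F) :=
        hψwcl.map hg.continuousAt (Filter.tendsto_map)
      refine le_of_forall_pos_le_add fun δ' hδ' => ?_
      have hev : {t : ℝ | |t| ≤ 4 * ε + δ'} ∈
          Filter.map (fun χ : WeakDual ℝ Y => χ (f x)) F := by
        rw [Filter.map_map, Filter.mem_map]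
        have hδnb : ∀ᶠ t : ℝ in nhds 0, |t| ≤ δ' := by
          filter_upwards [Metric.ball_mem_nhds (0:ℝ) hδ'] with t ht
          rw [Metric.mem_ball, Real.dist_eq, sub_zero] at ht
          exact ht.le
        have hsmall : ∀ᶠ n in atTop, |x' n x| ≤ δ' := (hx'null x).eventually hδnb
        refine hLatTop ?_
        filter_upwards [hsmall] with n hn
        simp only [Set.mem_preimage, Function.comp_apply, Set.mem_setOf_eq]
        have h1 := hφ n x
        have h2 : |φ n (f x)| ≤ |φ n (f x) - x' n x| + |x' n x| := by
          calc |φ n (f x)| = |(φ n (f x) - x' n x) + x' n x| := by ring_nf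
          _ ≤ _ := abs_add_le _ _
        calc |Φ n (f x)| = |φ n (f x)| := by rw [hΦapp]
          _ ≤ 4 * ε + δ' := by linarith
      have hcl' : ClusterPt (ψw (f x)) (𝓟 {t : ℝ | |t| ≤ 4 * ε + δ'}) :=
        hcl.mono (le_principal_iff.2 hev)
      have hmem : ψw (f x) ∈ closure {t : ℝ | |t| ≤ 4 * ε + δ'} :=
        mem_closure_iff_clusterPt.2 hcl'
      have hclosed : IsClosed {t : ℝ | |t| ≤ 4 * ε + δ'} :=
        isClosed_le continuous_abs continuous_const
      have := hclosed.closure_eq ▸ hmem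
      simpa [hψapp] using this
    -- derive contradiction: a neighborhood of ψw meets the image of the bad set
    set U : Set (WeakDual ℝ Y) :=
      ⋂ k ∈ Finset.range m, (fun χ : WeakDual ℝ Y => χ (y k)) ⁻¹' Metric.ball (ψw (y k)) δ
      with hUdef
    have hUopen : IsOpen U := by
      refine isOpen_biInter_finset fun k _ => ?_
      exact Metric.isOpen_ball.preimage (WeakDual.eval_continuous (y k))
    have hUmem : ψw ∈ U := by
      simp [hUdef, Metric.mem_ball, hδ]
    have hUnhds : U ∈ nhds ψw := hUopen.mem_nhds hUmem
    have hImg : Φ '' B ∈ F := by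
      rw [hFdef, Filter.mem_map]
      exact Filter.mem_of_superset hBL (Set.subset_preimage_image Φ B)
    have hne : (U ∩ Φ '' B).Nonempty := by
      have : U ∩ Φ '' B ∈ nhds ψw ⊓ F :=
        Filter.inter_mem (Filter.mem_inf_of_left hUnhds) (Filter.mem_inf_of_right hImg)
      exact hψwcl.neBot.nonempty_of_mem this
    obtain ⟨χ, hχU, n, hnB, hχn⟩ := hne
    refine hnB ⟨ψ, hψK, fun k hk => ?_⟩
    have := Set.mem_iInter₂.1 hχU k (Finset.mem_range.2 hk)
    rw [← hχn] at this
    simp only [Set.mem_preimage, Metric.mem_ball, Real.dist_eq] at this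
    have : |φ n (y k) - ψ (y k)| < δ := by
      simpa [hΦapp, hψapp] using this
    exact this.le
  -- Diagonal extraction
  have hNex : ∀ m : ℕ, ∃ N : ℕ, ∀ n ≥ N,
      ∃ ψ ∈ K, ∀ k < m, |φ n (y k) - ψ (y k)| ≤ 1 / (m + 1) :=
    fun m => eventually_atTop.1 (key m (1 / (m + 1)) (by positivity))
  choose N hN using hNex
  set M : ℕ → ℕ := fun n => Nat.findGreatest (fun m => N m ≤ n) n with hMdef
  have hPM : ∀ n, ∃ ψ ∈ K, ∀ k < M n, |φ n (y k) - ψ (y k)| ≤ 1 / (M n + 1) := by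
    intro n
    rcases Nat.eq_zero_or_pos (M n) with h | h
    · exact ⟨0, hK0, fun k hk => by rw [h] at hk; exact absurd hk (Nat.not_lt_zero k)⟩
    · have hspec : N (M n) ≤ n :=
        (Nat.findGreatest_eq_iff.1 rfl).2.1 (Nat.pos_iff_ne_zero.1 h)
      exact hN (M n) n hspec
  have hMtop : Tendsto M atTop atTop := by
    rw [tendsto_atTop_atTop]
    refine fun m => ⟨max m (N m), fun n hn => ?_⟩
    exact Nat.le_findGreatest (le_trans (le_max_left _ _) hn)
      (le_trans (le_max_right _ _) hn)
  choose ψ hψK hψ using hPM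
  refine ⟨ψ, hψK, ?_⟩
  -- convergence on the dense sequence
  have hconv : ∀ k : ℕ, Tendsto (fun n => φ n (y k) - ψ n (y k)) atTop (nhds 0) := by
    intro k
    have hbound : ∀ᶠ n in atTop, ‖φ n (y k) - ψ n (y k)‖ ≤ 1 / (M n + 1) := by
      filter_upwards [hMtop.eventually_ge_atTop (k + 1)] with n hn
      rw [Real.norm_eq_abs]
      exact hψ n k (Nat.lt_of_lt_of_le (Nat.lt_succ_self k) hn)
    have hlim : Tendsto (fun n => 1 / ((M n : ℝ) + 1)) atTop (nhds 0) :=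
      tendsto_one_div_add_atTop_nhds_zero_nat.comp hMtop
    exact squeeze_zero_norm' hbound hlim
  -- extend to all of Y by density and equiboundedness
  intro z
  rw [NormedAddCommGroup.tendsto_nhds_zero]
  intro δ hδ
  obtain ⟨k, hk⟩ := hy.exists_dist_lt z (show (0:ℝ) < δ / 3 by linarith)
  have h1 : ∀ᶠ n in atTop, ‖φ n (y k) - ψ n (y k)‖ < δ / 3 :=
    NormedAddCommGroup.tendsto_nhds_zero.1 (hconv k) (δ / 3) (by linarith)
  filter_upwards [h1] with n hn
  have hz : ‖z - y k‖ < δ / 3 := by rwa [← dist_eq_norm]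
  have e1 : ‖φ n z - φ n (y k)‖ ≤ ‖z - y k‖ := by
    rw [← map_sub]
    calc ‖φ n (z - y k)‖ ≤ ‖φ n‖ * ‖z - y k‖ := (φ n).le_opNorm _
      _ ≤ 1 * ‖z - y k‖ := by
          exact mul_le_mul_of_nonneg_right (hφball n) (norm_nonneg _)
      _ = ‖z - y k‖ := one_mul _
  have e3 : ‖ψ n (y k) - ψ n z‖ ≤ ‖y k - z‖ := by
    rw [← map_sub]
    calc ‖ψ n (y k - z)‖ ≤ ‖ψ n‖ * ‖y k - z‖ := (ψ n).le_opNorm _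
      _ ≤ 1 * ‖y k - z‖ := by
          exact mul_le_mul_of_nonneg_right (hψK n).1 (norm_nonneg _)
      _ = ‖y k - z‖ := one_mul _
  have hz' : ‖y k - z‖ < δ / 3 := by rwa [norm_sub_rev]
  calc ‖φ n z - ψ n z‖
      = ‖(φ n z - φ n (y k)) + (φ n (y k) - ψ n (y k)) + (ψ n (y k) - ψ n z)‖ := by ring_nf
    _ ≤ ‖(φ n z - φ n (y k)) + (φ n (y k) - ψ n (y k))‖ + ‖ψ n (y k) - ψ n z‖ :=
        norm_add_le _ _
    _ ≤ ‖φ n z - φ n (y k)‖ + ‖φ n (y k) - ψ n (y k)‖ + ‖ψ n (y k) - ψ n z‖ := by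
        exact add_le_add (norm_add_le _ _) le_rfl
    _ < δ / 3 + δ / 3 + δ / 3 := by
        refine add_lt_add (add_lt_add_of_le_of_lt (lt_of_le_of_lt e1 hz).le hn)
          (lt_of_le_of_lt e3 hz')
    _ = δ := by ring
end
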